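/- arXiv:2206.12184 — 6 statements merged into one kernel-verified Lean document; each statement's English description precedes it below -/
import Mathlib

section
/- Let X be a Poisson random variable with mean α/m, where α>0 and m is a positive integer. Then for every n≥0, E[(mX+1)_{n,λ}] = D_{m,λ}(n,α), where D_{m,λ}(n,x) is the degenerate Dowling polynomial. Equivalently, e^{-α/m} Σ_{k=0}^∞ (mk+1)_{n,λ} (α/m)^k / k! = D_{m,λ}(n,α). -/
open Finset

/-- Degenerate falling factorial `(x)_{n,λ} = x(x-λ)⋯(x-(n-1)λ)`. -/
noncomputable def dfall (lam x : ℝ) (n : ℕ) : ℝ := ∏ i ∈ Finset.range n, (x - i * lam)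

/-- Ordinary falling factorial `(x)_n = x(x-1)⋯(x-n+1)`. -/
noncomputable def ffall (x : ℝ) (n : ℕ) : ℝ := ∏ i ∈ Finset.range n, (x - i)

lemma dfall_zero' (lam x : ℝ) : dfall lam x 0 = 1 := by simp [dfall]

lemma dfall_succ' (lam x : ℝ) (j : ℕ) :
    dfall lam x (j + 1) = dfall lam x j * (x - j * lam) := by
  simp [dfall, Finset.prod_range_succ]

lemma rpow_le_two_rpow_abs {x : ℝ} (h1 : 1 / 2 ≤ x) (h2 : x ≤ 2) (q : ℝ) :
    x ^ q ≤ (2 : ℝ) ^ |q| := by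
  have hx : (0 : ℝ) < x := lt_of_lt_of_le (by norm_num) h1
  rcases le_or_gt 0 q with hq | hq
  · rw [abs_of_nonneg hq]
    exact Real.rpow_le_rpow hx.le h2 hq
  · rw [abs_of_neg hq]
    have hxinv : x⁻¹ ≤ 2 := by
      have h : (2 : ℝ)⁻¹ ≤ x := by norm_num at h1 ⊢; linarith
      calc x⁻¹ ≤ ((2 : ℝ)⁻¹)⁻¹ := inv_anti₀ (by norm_num) h
        _ = 2 := by norm_num
    have : x ^ q = (x⁻¹) ^ (-q) := by
      rw [Real.inv_rpow hx.le, Real.rpow_neg hx.le, inv_inv]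
    rw [this]
    exact Real.rpow_le_rpow (inv_nonneg.2 hx.le) hxinv (by linarith)

lemma aux_summable (μ A B : ℝ) (hμ : 0 ≤ μ) (hA : 0 ≤ A) (hB : 0 ≤ B) (j : ℕ) :
    Summable (fun k : ℕ => μ ^ k / (Nat.factorial k) * (A * ((k : ℝ) + 1)) ^ j
      * B ^ (k + 1)) := by
  have hmain := (Real.summable_pow_div_factorial (μ * B * Real.exp 1)).mul_left
    (A ^ j * (Nat.factorial j) * Real.exp 1 * B)
  refine Summable.of_nonneg_of_le (fun k => by positivity) (fun k => ?_) hmain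
  have hk : ((k : ℝ) + 1) ^ j ≤ (Nat.factorial j) * (Real.exp 1 * Real.exp 1 ^ k) := by
    have h1 : ((k : ℝ) + 1) ^ j / (Nat.factorial j) ≤ Real.exp ((k : ℝ) + 1) :=
      Real.pow_div_factorial_le_exp (x := (k:ℝ)+1) (by positivity) j
    have h2 : Real.exp ((k : ℝ) + 1) = Real.exp 1 * Real.exp 1 ^ k := by
      rw [Real.exp_add, ← Real.exp_nat_mul, mul_one, mul_comm]
    rw [h2] at h1
    have hj : (0 : ℝ) < (Nat.factorial j : ℝ) := by positivity
    calc ((k : ℝ) + 1) ^ j = (((k : ℝ) + 1) ^ j / (Nat.factorial j)) * (Nat.factorial j) := by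
          field_simp
      _ ≤ (Real.exp 1 * Real.exp 1 ^ k) * (Nat.factorial j) :=
          mul_le_mul_of_nonneg_right h1 hj.le
      _ = (Nat.factorial j) * (Real.exp 1 * Real.exp 1 ^ k) := by ring
  calc μ ^ k / (Nat.factorial k) * (A * ((k : ℝ) + 1)) ^ j * B ^ (k + 1)
      = (A ^ j * ((k : ℝ) + 1) ^ j) * (B * (μ ^ k * B ^ k / (Nat.factorial k))) := by
        rw [mul_pow, pow_succ]; ring
    _ ≤ (A ^ j * ((Nat.factorial j) * (Real.exp 1 * Real.exp 1 ^ k)))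
        * (B * (μ ^ k * B ^ k / (Nat.factorial k))) := by
        have h0 : (0 : ℝ) ≤ B * (μ ^ k * B ^ k / (Nat.factorial k)) := by positivity
        exact mul_le_mul_of_nonneg_right
          (mul_le_mul_of_nonneg_left hk (by positivity)) h0
    _ = A ^ j * (Nat.factorial j) * Real.exp 1 * B
        * ((μ * B * Real.exp 1) ^ k / (Nat.factorial k)) := by
        rw [mul_pow, mul_pow]; ring

theorem stmt1 (m : ℕ) (hm : 0 < m) (α lam : ℝ) (hα : 0 < α) (hlam : lam ≠ 0)
    (D : ℕ → ℝ)
    (hD : ∀ n : ℕ, iteratedDeriv n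
        (fun t : ℝ => (1 + lam * t) ^ ((1 : ℝ) / lam) *
          Real.exp ((α / m) * ((1 + lam * t) ^ ((m : ℝ) / lam) - 1))) 0 = D n) :
    ∀ n : ℕ,
      Real.exp (-(α / m)) *
        ∑' k : ℕ, dfall lam ((m : ℝ) * k + 1) n * (α / m) ^ k / (Nat.factorial k) = D n := by
  intro n
  have hm' : (0 : ℝ) < (m : ℝ) := by exact_mod_cast hm
  have hm1 : (1 : ℝ) ≤ (m : ℝ) := by exact_mod_cast hm
  set μ : ℝ := α / m with hμdef
  have hμ : 0 < μ := div_pos hα hm'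
  have hlamabs : (0 : ℝ) < |lam| := abs_pos.2 hlam
  set f : ℝ → ℝ := fun t : ℝ => (1 + lam * t) ^ ((1 : ℝ) / lam) *
    Real.exp (μ * ((1 + lam * t) ^ ((m : ℝ) / lam) - 1)) with hfdef
  set c : ℕ → ℝ := fun k => Real.exp (-μ) * μ ^ k / (Nat.factorial k) with hcdef
  set G : ℕ → ℕ → ℝ → ℝ := fun j k t =>
    c k * dfall lam ((m : ℝ) * k + 1) j
      * (1 + lam * t) ^ (((m : ℝ) * k + 1) / lam - (j : ℝ)) with hGdef
  set δ : ℝ := 1 / (2 * |lam|) with hδdef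
  have hδ : 0 < δ := by positivity
  set s : Set ℝ := Metric.ball (0 : ℝ) δ with hsdef
  have hs : IsOpen s := Metric.isOpen_ball
  have hsc : IsPreconnected s := (convex_ball (0 : ℝ) δ).isPreconnected
  have h0s : (0 : ℝ) ∈ s := Metric.mem_ball_self hδ
  have hb : ∀ t ∈ s, 1 / 2 < 1 + lam * t ∧ 1 + lam * t < 3 / 2 := by
    intro t ht
    have h1 : |t| < δ := by
      rwa [hsdef, Metric.mem_ball, Real.dist_eq, sub_zero] at ht
    have h2 : |lam * t| < 1 / 2 := by
      rw [abs_mul]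
      calc |lam| * |t| < |lam| * δ := by
            exact mul_lt_mul_of_pos_left h1 hlamabs
        _ = 1 / 2 := by rw [hδdef]; field_simp
    rw [abs_lt] at h2
    constructor <;> linarith [h2.1, h2.2]
  -- constants for bounds
  set A : ℕ → ℝ := fun J => (m : ℝ) + 1 + J * |lam| with hAdef
  set B : ℕ → ℝ := fun J => (2 : ℝ) ^ (((m : ℝ) + 1) / |lam| + J) with hBdef
  have hA : ∀ J, 0 ≤ A J := fun J => by rw [hAdef]; positivity
  have hB : ∀ J, 0 ≤ B J := fun J => Real.rpow_nonneg (by norm_num) _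
  -- norm bound
  have hbound : ∀ (J k : ℕ), ∀ t ∈ s, ‖G J k t‖ ≤
      Real.exp (-μ) * (μ ^ k / (Nat.factorial k) * (A J * ((k : ℝ) + 1)) ^ J
        * B J ^ (k + 1)) := by
    intro J k t ht
    obtain ⟨hb1, hb2⟩ := hb t ht
    have hbp : (0 : ℝ) < 1 + lam * t := by linarith
    have hx1 : (1 : ℝ) ≤ (m : ℝ) * k + 1 := by
      have := mul_nonneg hm'.le (Nat.cast_nonneg (α := ℝ) k); linarith
    have hxk : (m : ℝ) * k + 1 ≤ ((m : ℝ) + 1) * ((k : ℝ) + 1) := by nlinarith [Nat.cast_nonneg (α := ℝ) k]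
    have hck : 0 ≤ c k := by rw [hcdef]; positivity
    have hd : |dfall lam ((m : ℝ) * k + 1) J| ≤ (A J * ((k : ℝ) + 1)) ^ J := by
      rw [dfall, Finset.abs_prod]
      calc ∏ i ∈ Finset.range J, |(m : ℝ) * k + 1 - i * lam|
          ≤ ∏ _i ∈ Finset.range J, (A J * ((k : ℝ) + 1)) := by
            refine Finset.prod_le_prod (fun i _ => abs_nonneg _) (fun i hi => ?_)
            have hiJ : (i : ℝ) ≤ (J : ℝ) := by
              exact_mod_cast (Finset.mem_range.1 hi).le
            have : |(m : ℝ) * k + 1 - i * lam| ≤ ((m : ℝ) * k + 1) + (i : ℝ) * |lam| := by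
              calc |(m : ℝ) * k + 1 - i * lam| ≤ |(m : ℝ) * k + 1| + |(i : ℝ) * lam| :=
                    abs_sub _ _
                _ = ((m : ℝ) * k + 1) + (i : ℝ) * |lam| := by
                    rw [abs_of_pos (by positivity), abs_mul, Nat.abs_cast]
            refine this.trans ?_
            simp only [hAdef]
            have hk0 : (0 : ℝ) ≤ (k : ℝ) := Nat.cast_nonneg k
            nlinarith [hxk, mul_le_mul_of_nonneg_right hiJ (abs_nonneg lam),
              mul_nonneg (mul_nonneg (Nat.cast_nonneg (α := ℝ) J) (abs_nonneg lam)) hk0]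
        _ = (A J * ((k : ℝ) + 1)) ^ J := by
            rw [Finset.prod_const, Finset.card_range]
    have hq : |((m : ℝ) * k + 1) / lam - (J : ℝ)| ≤
        (((m : ℝ) + 1) / |lam| + J) * ((k : ℝ) + 1) := by
      have h1 : |((m : ℝ) * k + 1) / lam - (J : ℝ)| ≤ ((m : ℝ) * k + 1) / |lam| + J := by
        calc |((m : ℝ) * k + 1) / lam - (J : ℝ)|
            ≤ |((m : ℝ) * k + 1) / lam| + |(J : ℝ)| := abs_sub _ _
          _ = ((m : ℝ) * k + 1) / |lam| + J := by
              rw [abs_div, abs_of_pos (by positivity : (0:ℝ) < (m:ℝ)*k+1), Nat.abs_cast]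
      refine h1.trans ?_
      have h2 : ((m : ℝ) * k + 1) / |lam| ≤ ((m : ℝ) + 1) * ((k : ℝ) + 1) / |lam| :=
        (div_le_div_iff_of_pos_right hlamabs).2 hxk
      have h3 : (J : ℝ) ≤ (J : ℝ) * ((k : ℝ) + 1) := by
        nlinarith [Nat.cast_nonneg (α := ℝ) k, Nat.cast_nonneg (α := ℝ) J]
      have := add_le_add h2 h3
      calc ((m : ℝ) * k + 1) / |lam| + J
          ≤ ((m : ℝ) + 1) * ((k : ℝ) + 1) / |lam| + (J : ℝ) * ((k : ℝ) + 1) := this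
        _ = (((m : ℝ) + 1) / |lam| + J) * ((k : ℝ) + 1) := by ring
    have hrp : (1 + lam * t) ^ (((m : ℝ) * k + 1) / lam - (J : ℝ)) ≤ B J ^ (k + 1) := by
      calc (1 + lam * t) ^ (((m : ℝ) * k + 1) / lam - (J : ℝ))
          ≤ (2 : ℝ) ^ |((m : ℝ) * k + 1) / lam - (J : ℝ)| :=
            rpow_le_two_rpow_abs hb1.le (by linarith) _
        _ ≤ (2 : ℝ) ^ ((((m : ℝ) + 1) / |lam| + J) * ((k : ℝ) + 1)) :=
            Real.rpow_le_rpow_of_exponent_le one_le_two hq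
        _ = B J ^ (k + 1) := by
            rw [hBdef, ← Real.rpow_natCast ((2:ℝ) ^ (((m : ℝ) + 1) / |lam| + (J:ℝ))) (k+1),
              ← Real.rpow_mul (by norm_num : (0:ℝ) ≤ 2)]
            congr 1
            push_cast
            ring
    have hrp0 : (0 : ℝ) ≤ (1 + lam * t) ^ (((m : ℝ) * k + 1) / lam - (J : ℝ)) :=
      Real.rpow_nonneg hbp.le _
    rw [hGdef]
    simp only [Real.norm_eq_abs, abs_mul]
    rw [abs_of_nonneg hck, abs_of_nonneg hrp0]
    have hck' : c k = Real.exp (-μ) * (μ ^ k / (Nat.factorial k)) := by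
      rw [hcdef]; ring
    calc c k * |dfall lam ((m : ℝ) * k + 1) J|
          * (1 + lam * t) ^ (((m : ℝ) * k + 1) / lam - (J : ℝ))
        ≤ c k * (A J * ((k : ℝ) + 1)) ^ J * B J ^ (k + 1) := by
          have := mul_le_mul (mul_le_mul_of_nonneg_left hd hck) hrp hrp0
            (by positivity)
          exact this
      _ = Real.exp (-μ) * (μ ^ k / (Nat.factorial k) * (A J * ((k : ℝ) + 1)) ^ J
          * B J ^ (k + 1)) := by rw [hck']; ring
  have hsumJ : ∀ J : ℕ, Summable (fun k : ℕ =>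
      Real.exp (-μ) * (μ ^ k / (Nat.factorial k) * (A J * ((k : ℝ) + 1)) ^ J
        * B J ^ (k + 1))) := fun J =>
    (aux_summable μ (A J) (B J) hμ.le (hA J) (hB J) J).mul_left _
  have hg0 : ∀ J : ℕ, Summable (fun k => G J k 0) := fun J =>
    Summable.of_norm_bounded (hsumJ J) (fun k => hbound J k 0 h0s)
  -- derivative of each term
  have hderiv : ∀ (J k : ℕ), ∀ y ∈ s, HasDerivAt (G J k) (G (J + 1) k y) y := by
    intro J k y hy
    obtain ⟨hb1, hb2⟩ := hb y hy
    have hbp : (0 : ℝ) < 1 + lam * y := by linarith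
    have h1 : HasDerivAt (fun t : ℝ => 1 + lam * t) lam y := by
      simpa using ((hasDerivAt_id y).const_mul lam).const_add 1
    have h2 := (h1.rpow_const (p := ((m : ℝ) * k + 1) / lam - (J : ℝ)) (Or.inl hbp.ne')).const_mul
      (c k * dfall lam ((m : ℝ) * k + 1) J)
    have hfun : G J k = fun t : ℝ => c k * dfall lam ((m : ℝ) * k + 1) J
        * (1 + lam * t) ^ (((m : ℝ) * k + 1) / lam - (J : ℝ)) := rfl
    rw [hfun]
    refine h2.congr_deriv ?_
    rw [hGdef]
    simp only
    rw [dfall_succ']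
    have he : ((m : ℝ) * k + 1) / lam - ((J + 1 : ℕ) : ℝ)
        = ((m : ℝ) * k + 1) / lam - (J : ℝ) - 1 := by push_cast; ring
    rw [he]
    have hlq : lam * (((m : ℝ) * k + 1) / lam - (J : ℝ)) = ((m : ℝ) * k + 1) - (J : ℝ) * lam := by
      field_simp
    rw [mul_comm (lam) (((m : ℝ) * k + 1) / lam - (J : ℝ))] at hlq ⊢
    rw [hlq]
    ring
  -- exp as tsum
  have hexp : ∀ z : ℝ, Real.exp z = ∑' k : ℕ, z ^ k / (Nat.factorial k) := by
    intro z
    rw [Real.exp_eq_exp_ℝ, NormedSpace.exp_eq_tsum_div]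
  -- main induction
  have main : ∀ j : ℕ, ∀ t ∈ s, iteratedDeriv j f t = ∑' k, G j k t := by
    intro j
    induction j with
    | zero =>
      intro t ht
      obtain ⟨hb1, hb2⟩ := hb t ht
      have hbp : (0 : ℝ) < 1 + lam * t := by linarith
      rw [iteratedDeriv_zero]
      have hsplit : μ * ((1 + lam * t) ^ ((m : ℝ) / lam) - 1)
          = μ * (1 + lam * t) ^ ((m : ℝ) / lam) + (-μ) := by ring
      rw [hfdef]
      simp only
      rw [hsplit, Real.exp_add, hexp (μ * (1 + lam * t) ^ ((m : ℝ) / lam)),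
        ← tsum_mul_right, ← tsum_mul_left]
      refine tsum_congr fun k => ?_
      have h1 : ((1 + lam * t) ^ ((m : ℝ) / lam)) ^ k
          = (1 + lam * t) ^ ((m : ℝ) * k / lam) := by
        rw [← Real.rpow_natCast ((1 + lam * t) ^ ((m : ℝ) / lam)) k,
          ← Real.rpow_mul hbp.le]
        congr 1
        ring
      have h2 : (1 + lam * t) ^ ((1 : ℝ) / lam) * (1 + lam * t) ^ ((m : ℝ) * k / lam)
          = (1 + lam * t) ^ (((m : ℝ) * k + 1) / lam) := by
        rw [← Real.rpow_add hbp]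
        congr 1
        ring
      rw [hGdef]
      simp only
      rw [dfall_zero', hcdef]
      simp only [Nat.cast_zero, sub_zero]
      rw [mul_pow, h1, ← h2]
      ring
    | succ j ih =>
      intro t ht
      rw [iteratedDeriv_succ]
      have hEq : iteratedDeriv j f =ᶠ[nhds t] fun z => ∑' k, G j k z :=
        Filter.eventuallyEq_of_mem (hs.mem_nhds ht) (fun z hz => ih z hz)
      rw [hEq.deriv_eq]
      exact (hasDerivAt_tsum_of_isPreconnected (hsumJ (j + 1)) hs hsc
        (fun k y hy => hderiv j k y hy)
        (fun k y hy => hbound (j + 1) k y hy) h0s (hg0 j) ht).deriv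
  -- conclude
  rw [← hD n]
  have hDf : iteratedDeriv n
      (fun t : ℝ => (1 + lam * t) ^ ((1 : ℝ) / lam) *
        Real.exp (μ * ((1 + lam * t) ^ ((m : ℝ) / lam) - 1))) 0 = ∑' k, G n k 0 :=
    main n 0 h0s
  rw [hDf, ← tsum_mul_left]
  refine tsum_congr fun k => ?_
  rw [hGdef, hcdef]
  simp only [mul_zero, add_zero, Real.one_rpow]
  ring
end

section
/- For n≥0 and λ a nonzero real, φ_{n,λ}(α) + (d/dα)φ_{n,λ}(α) = Σ_{k=0}^n ((k+1)S_{2,λ}(n,k+1) + S_{2,λ}(n,k)) α^k, and this quantity equals E[(X+1)_{n,λ}] for X a Poisson random variable with parameter α (i.e., equals e^{-α} Σ_{i=0}^∞ (i+1)_{n,λ} α^i/i!). -/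
open Finset

lemma ffall_nat (m k : ℕ) : ffall (m : ℝ) k = (m.descFactorial k : ℝ) := by
  rcases lt_or_ge m k with h | h
  · rw [Nat.descFactorial_eq_zero_iff_lt.2 h]
    have : (m : ℕ) ∈ Finset.range k := Finset.mem_range.2 h
    simp [ffall, Finset.prod_eq_zero this]
  · rw [Nat.descFactorial_eq_prod_range, Nat.cast_prod, ffall]
    apply Finset.prod_congr rfl
    intro i hi
    have : i ≤ m := le_trans (Finset.mem_range.1 hi).le h
    push_cast [Nat.cast_sub this]
    ring

lemma hasSum_ffall (α : ℝ) (k : ℕ) :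
    HasSum (fun i : ℕ => ffall (i : ℝ) k * α ^ i / (Nat.factorial i))
      (α ^ k * Real.exp α) := by
  have hexp : HasSum (fun j : ℕ => α ^ j / (Nat.factorial j)) (Real.exp α) := by
    rw [Real.exp_eq_exp_ℝ]
    exact NormedSpace.expSeries_div_hasSum_exp α
  have hshift : HasSum (fun j : ℕ => ffall ((j + k : ℕ) : ℝ) k * α ^ (j + k) /
      (Nat.factorial (j + k))) (α ^ k * Real.exp α) := by
    have := (hexp.mul_left (α ^ k))
    convert this using 2 with j
    · rfl
    rw [ffall_nat]
    have hfac : ((j + k).factorial : ℝ) = (Nat.factorial j : ℝ) * ((j + k).descFactorial k : ℝ) := by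
      rw [← Nat.cast_mul]
      congr 1
      have := Nat.factorial_mul_descFactorial (n := j + k) (k := k) (Nat.le_add_left k j)
      simpa [Nat.add_sub_cancel] using this.symm
    have h1 : ((j + k).descFactorial k : ℝ) ≠ 0 := by
      have : ¬ (j + k < k) := by omega
      exact_mod_cast fun h => this (Nat.descFactorial_eq_zero_iff_lt.1 (by exact_mod_cast h))
    field_simp [hfac]
    rw [hfac]
    ring
  have h0 : ∑ i ∈ Finset.range k, ffall (i : ℝ) k * α ^ i / (Nat.factorial i) = 0 := by
    apply Finset.sum_eq_zero
    intro i hi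
    rw [ffall_nat, Nat.descFactorial_eq_zero_iff_lt.2 (Finset.mem_range.1 hi)]
    simp
  have h2 := (hasSum_nat_add_iff (f := fun i : ℕ => ffall (i : ℝ) k * α ^ i / (Nat.factorial i))
    (g := α ^ k * Real.exp α) k).1 (by exact_mod_cast hshift)
  rwa [h0, add_zero] at h2

lemma ffall_add_one (x : ℝ) (k : ℕ) :
    ffall (x + 1) k = ffall x k + k * ffall x (k - 1) := by
  cases k with
  | zero => simp [ffall]
  | succ k =>
    have h1 : ffall (x + 1) (k + 1) = (x + 1) * ffall x k := by
      rw [ffall, Finset.prod_range_succ']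
      simp only [Nat.cast_zero, sub_zero]
      rw [mul_comm, ffall]
      congr 1
      apply Finset.prod_congr rfl
      intro i _
      push_cast; ring
    have h2 : ffall x (k + 1) = ffall x k * (x - k) := by
      rw [ffall, Finset.prod_range_succ, ffall]
    rw [h1, h2, Nat.add_sub_cancel]
    push_cast; ring

lemma hasSum_ffall_shift (α : ℝ) (k : ℕ) :
    HasSum (fun i : ℕ => ffall ((i : ℝ) + 1) k * α ^ i / (Nat.factorial i))
      ((α ^ k + k * α ^ (k - 1)) * Real.exp α) := by
  have h := (hasSum_ffall α k).add ((hasSum_ffall α (k - 1)).mul_left (k : ℝ))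
  have e1 : (fun i : ℕ => ffall ((i : ℝ) + 1) k * α ^ i / (Nat.factorial i))
      = fun i : ℕ => ffall (i : ℝ) k * α ^ i / (Nat.factorial i)
        + (k : ℝ) * (ffall (i : ℝ) (k - 1) * α ^ i / (Nat.factorial i)) := by
    funext i; rw [ffall_add_one]; ring
  have e2 : (α ^ k + (k : ℝ) * α ^ (k - 1)) * Real.exp α
      = α ^ k * Real.exp α + (k : ℝ) * (α ^ (k - 1) * Real.exp α) := by ring
  rw [e1, e2]; exact h

theorem stmt4 (lam α : ℝ) (hlam : lam ≠ 0) (hα : 0 < α) (n : ℕ)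
    (S : ℕ → ℕ → ℝ)
    (hS : ∀ (x : ℝ) (N : ℕ),
      dfall lam x N = ∑ k ∈ Finset.range (N + 1), S N k * ffall x k)
    (hS0 : S n (n + 1) = 0) :
    ((∑ k ∈ Finset.range (n + 1), S n k * α ^ k) +
        deriv (fun a : ℝ => ∑ k ∈ Finset.range (n + 1), S n k * a ^ k) α
      = ∑ k ∈ Finset.range (n + 1), ((k + 1 : ℝ) * S n (k + 1) + S n k) * α ^ k) ∧
    ((∑ k ∈ Finset.range (n + 1), S n k * α ^ k) +
        deriv (fun a : ℝ => ∑ k ∈ Finset.range (n + 1), S n k * a ^ k) α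
      = Real.exp (-α) * ∑' i : ℕ, dfall lam ((i : ℝ) + 1) n * α ^ i / (Nat.factorial i)) := by
  -- the derivative
  have hderiv : deriv (fun a : ℝ => ∑ k ∈ Finset.range (n + 1), S n k * a ^ k) α
      = ∑ k ∈ Finset.range (n + 1), S n k * ((k : ℝ) * α ^ (k - 1)) := by
    have : HasDerivAt (fun a : ℝ => ∑ k ∈ Finset.range (n + 1), S n k * a ^ k)
        (∑ k ∈ Finset.range (n + 1), S n k * ((k : ℝ) * α ^ (k - 1))) α := by
      apply HasDerivAt.fun_sum
      intro k _
      exact (hasDerivAt_pow k α).const_mul (S n k)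
    exact this.deriv
  -- reindexing lemma
  have hreindex : ∑ k ∈ Finset.range (n + 1), S n k * ((k : ℝ) * α ^ (k - 1))
      = ∑ k ∈ Finset.range (n + 1), ((k : ℝ) + 1) * S n (k + 1) * α ^ k := by
    rw [Finset.sum_range_succ' (fun k => S n k * ((k : ℝ) * α ^ (k - 1)))]
    rw [Finset.sum_range_succ (fun k => ((k : ℝ) + 1) * S n (k + 1) * α ^ k)]
    rw [hS0]
    simp only [Nat.cast_zero, zero_mul, mul_zero, add_zero, Nat.add_sub_cancel]
    apply Finset.sum_congr rfl
    intro k _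
    push_cast; ring
  constructor
  · rw [hderiv, hreindex, ← Finset.sum_add_distrib]
    apply Finset.sum_congr rfl
    intro k _
    ring
  · -- tsum part
    have hterm : ∀ i : ℕ, dfall lam ((i : ℝ) + 1) n * α ^ i / (Nat.factorial i)
        = ∑ k ∈ Finset.range (n + 1), S n k * (ffall ((i : ℝ) + 1) k * α ^ i / (Nat.factorial i)) := by
      intro i
      rw [hS ((i : ℝ) + 1) n, Finset.sum_mul, Finset.sum_div]
      apply Finset.sum_congr rfl
      intro k _
      ring
    have hsum : HasSum (fun i : ℕ => dfall lam ((i : ℝ) + 1) n * α ^ i / (Nat.factorial i))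
        (∑ k ∈ Finset.range (n + 1), S n k * ((α ^ k + k * α ^ (k - 1)) * Real.exp α)) := by
      have := hasSum_sum (s := Finset.range (n + 1))
        (f := fun (k : ℕ) (i : ℕ) => S n k * (ffall ((i : ℝ) + 1) k * α ^ i / (Nat.factorial i)))
        (a := fun k => S n k * ((α ^ k + k * α ^ (k - 1)) * Real.exp α))
        (fun k _ => (hasSum_ffall_shift α k).mul_left (S n k))
      simpa only [← hterm] using this
    rw [hsum.tsum_eq, hderiv]
    have e3 : ∑ k ∈ Finset.range (n + 1), S n k * ((α ^ k + (k : ℝ) * α ^ (k - 1)) * Real.exp α)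
        = Real.exp α * ∑ k ∈ Finset.range (n + 1),
            (S n k * α ^ k + S n k * ((k : ℝ) * α ^ (k - 1))) := by
      rw [Finset.mul_sum]
      apply Finset.sum_congr rfl
      intro k _
      ring
    rw [e3, ← mul_assoc, ← Real.exp_add, neg_add_cancel, Real.exp_zero, one_mul,
      Finset.sum_add_distrib]
end

section
/- Let X be a Poisson random variable with mean α/m. Then for n, r ≥ 0, D^{(r)}_{m,λ}(n,α) = Σ_{k=0}^n C(n,k) (r)_{n-k,λ} m^k φ_{k,λ/m}(α/m). -/
open Finset

open Topology

private lemma diffAt_iter {s : Set ℝ} (hs : IsOpen s) {f : ℝ → ℝ}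
    (hf : ContDiffOn ℝ (⊤ : ℕ∞) f s) (k : ℕ) {x : ℝ} (hx : x ∈ s) :
    DifferentiableAt ℝ (iteratedDeriv k f) x := by
  have h1 : Set.EqOn (iteratedDerivWithin k f s) (iteratedDeriv k f) s := fun y hy => by
    rw [iteratedDerivWithin, iteratedDeriv, iteratedFDerivWithin_of_isOpen k hs hy]
  have h2 : DifferentiableWithinAt ℝ (iteratedDerivWithin k f s) s x :=
    (hf.differentiableOn_iteratedDerivWithin (by exact_mod_cast ENat.coe_lt_top k)
      hs.uniqueDiffOn) x hx
  exact ((h2.congr (fun y hy => (h1 hy).symm) (h1 hx).symm).differentiableAt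
    (hs.mem_nhds hx))

private lemma leibniz_on {s : Set ℝ} (hs : IsOpen s) {f g : ℝ → ℝ}
    (hf : ContDiffOn ℝ (⊤ : ℕ∞) f s) (hg : ContDiffOn ℝ (⊤ : ℕ∞) g s) :
    ∀ n : ℕ, ∀ x ∈ s, iteratedDeriv n (fun t => f t * g t) x =
      ∑ k ∈ Finset.range (n + 1),
        (n.choose k : ℝ) * (iteratedDeriv k f x * iteratedDeriv (n - k) g x) := by
  intro n
  induction n with
  | zero => intro x hx; simp
  | succ n ih =>
    intro x hx
    have hev : (iteratedDeriv n fun t => f t * g t) =ᶠ[𝓝 x]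
        (fun y => ∑ k ∈ Finset.range (n + 1),
          (n.choose k : ℝ) * (iteratedDeriv k f y * iteratedDeriv (n - k) g y)) := by
      filter_upwards [hs.mem_nhds hx] with y hy using ih y hy
    rw [iteratedDeriv_succ, hev.deriv_eq]
    have hterm : ∀ k : ℕ, HasDerivAt
        (fun y => (n.choose k : ℝ) * (iteratedDeriv k f y * iteratedDeriv (n - k) g y))
        ((n.choose k : ℝ) * (iteratedDeriv (k + 1) f x * iteratedDeriv (n - k) g x
          + iteratedDeriv k f x * iteratedDeriv (n - k + 1) g x)) x := by
      intro k
      have h1 := (diffAt_iter hs hf k hx).hasDerivAt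
      have h2 := (diffAt_iter hs hg (n - k) hx).hasDerivAt
      have h3 := (h1.mul h2).const_mul ((n.choose k : ℝ))
      simpa [iteratedDeriv_succ, mul_add, mul_comm, mul_left_comm] using h3
    rw [HasDerivAt.deriv (HasDerivAt.fun_sum (fun k _ => hterm k))]
    rw [Finset.sum_choose_succ_mul (fun i j => iteratedDeriv i f x * iteratedDeriv j g x) n]
    rw [show (∑ k ∈ Finset.range (n + 1),
        (n.choose k : ℝ) * (iteratedDeriv (k + 1) f x * iteratedDeriv (n - k) g x
          + iteratedDeriv k f x * iteratedDeriv (n - k + 1) g x)) =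
      ∑ k ∈ Finset.range (n + 1),
        ((n.choose k : ℝ) * (iteratedDeriv k f x * iteratedDeriv (n + 1 - k) g x)
          + (n.choose k : ℝ) * (iteratedDeriv (k + 1) f x * iteratedDeriv (n - k) g x)) from
      Finset.sum_congr rfl fun k hk => by
        have hk' : n - k + 1 = n + 1 - k := by
          have := Finset.mem_range.mp hk; omega
        rw [hk']; ring]
    rw [Finset.sum_add_distrib]

private lemma scale_iter {s : Set ℝ} (hs : IsOpen s) {f : ℝ → ℝ}
    (hf : ContDiffOn ℝ (⊤ : ℕ∞) f s) (c : ℝ) :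
    ∀ k : ℕ, ∀ x : ℝ, c * x ∈ s → iteratedDeriv k (fun t => f (c * t)) x
      = c ^ k * iteratedDeriv k f (c * x) := by
  intro k
  induction k with
  | zero => intro x hx; simp
  | succ k ih =>
    intro x hx
    have hs' : IsOpen ((fun t : ℝ => c * t) ⁻¹' s) := hs.preimage (by fun_prop)
    have hev : iteratedDeriv k (fun t => f (c * t)) =ᶠ[𝓝 x]
        fun y => c ^ k * iteratedDeriv k f (c * y) := by
      filter_upwards [hs'.mem_nhds hx] with y hy using ih y hy
    rw [iteratedDeriv_succ, hev.deriv_eq]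
    have h1 : HasDerivAt (fun y => iteratedDeriv k f (c * y))
        (iteratedDeriv (k + 1) f (c * x) * c) x := by
      have h0 := (diffAt_iter hs hf k hx).hasDerivAt
      have h2 : HasDerivAt (fun y : ℝ => c * y) c x := by
        simpa using (hasDerivAt_id x).const_mul c
      rw [iteratedDeriv_succ]; exact h0.comp x h2
    rw [(h1.const_mul (c ^ k)).deriv]
    rw [iteratedDeriv_succ]
    ring

private lemma rpow_affine_open (lam : ℝ) : IsOpen {t : ℝ | 0 < 1 + lam * t} :=
  isOpen_lt continuous_const (by fun_prop)

private lemma contDiffAt_rpow_affine {lam : ℝ} (q : ℝ) {x : ℝ} (hx : 0 < 1 + lam * x) :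
    ContDiffAt ℝ (⊤ : ℕ∞) (fun t : ℝ => (1 + lam * t) ^ q) x :=
  (Real.contDiffAt_rpow_const_of_ne (p := q) (ne_of_gt hx)).comp (g := fun y : ℝ => y ^ q) x
    (by fun_prop : ContDiffAt ℝ ((⊤ : ℕ∞) : WithTop ℕ∞) (fun t : ℝ => 1 + lam * t) x)

private lemma rpow_iter (lam q : ℝ) :
    ∀ j : ℕ, ∀ x : ℝ, 0 < 1 + lam * x →
      iteratedDeriv j (fun t : ℝ => (1 + lam * t) ^ q) x
        = (∏ i ∈ Finset.range j, (lam * (q - i))) * (1 + lam * x) ^ (q - j) := by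
  intro j
  induction j with
  | zero => intro x hx; simp
  | succ j ih =>
    intro x hx
    have hev : iteratedDeriv j (fun t : ℝ => (1 + lam * t) ^ q) =ᶠ[𝓝 x]
        fun y => (∏ i ∈ Finset.range j, (lam * (q - i))) * (1 + lam * y) ^ (q - j) := by
      filter_upwards [(rpow_affine_open lam).mem_nhds hx] with y hy using ih y hy
    rw [iteratedDeriv_succ, hev.deriv_eq]
    have h1 : HasDerivAt (fun y : ℝ => (1 + lam * y) ^ (q - j))
        ((q - j) * (1 + lam * x) ^ (q - j - 1) * lam) x := by
      have hinner : HasDerivAt (fun y : ℝ => 1 + lam * y) lam x := by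
        simpa using ((hasDerivAt_id x).const_mul lam).const_add 1
      exact (Real.hasDerivAt_rpow_const (Or.inl (ne_of_gt hx))).comp x hinner
    rw [(h1.const_mul _).deriv, Finset.prod_range_succ]
    have hcast : q - ((j : ℕ) + 1 : ℕ) = q - j - 1 := by push_cast; ring
    rw [hcast]
    ring

theorem stmt6 (m : ℕ) (hm : 0 < m) (r : ℕ) (α lam : ℝ) (hα : 0 < α) (hlam : lam ≠ 0)
    (D : ℕ → ℝ)
    (hD : ∀ n : ℕ, iteratedDeriv n
        (fun t : ℝ => (1 + lam * t) ^ ((r : ℝ) / lam) *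
          Real.exp ((α / m) * ((1 + lam * t) ^ ((m : ℝ) / lam) - 1))) 0 = D n)
    (phi : ℕ → ℝ)
    (hphi : ∀ n : ℕ, iteratedDeriv n
        (fun t : ℝ => Real.exp ((α / m) * ((1 + (lam / m) * t) ^ ((m : ℝ) / lam) - 1))) 0
      = phi n) :
    ∀ n : ℕ,
      D n = ∑ k ∈ Finset.range (n + 1),
        (n.choose k : ℝ) * dfall lam (r : ℝ) (n - k) * (m : ℝ) ^ k * phi k := by
  have hm' : (m : ℝ) ≠ 0 := Nat.cast_ne_zero.mpr hm.ne'
  set A : ℝ → ℝ := fun t => (1 + lam * t) ^ ((r : ℝ) / lam) with hA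
  set B : ℝ → ℝ := fun t =>
    Real.exp ((α / m) * ((1 + (lam / m) * t) ^ ((m : ℝ) / lam) - 1)) with hB
  set s : Set ℝ := {t : ℝ | 0 < 1 + lam * t} with hsdef
  set s2 : Set ℝ := {t : ℝ | 0 < 1 + (lam / m) * t} with hs2def
  have hs : IsOpen s := rpow_affine_open lam
  have hs2 : IsOpen s2 := rpow_affine_open (lam / m)
  have h0s : (0 : ℝ) ∈ s := by simp [hsdef]
  have h0s2 : (0 : ℝ) ∈ s2 := by simp [hs2def]
  -- smoothness of A on s
  have hAc : ContDiffOn ℝ (⊤ : ℕ∞) A s := fun x hx =>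
    (contDiffAt_rpow_affine _ hx).contDiffWithinAt
  -- smoothness of B on s2
  have hBc : ContDiffOn ℝ (⊤ : ℕ∞) B s2 := by
    intro x hx
    have h1 : ContDiffAt ℝ (⊤ : ℕ∞)
        (fun t : ℝ => (α / m) * ((1 + (lam / m) * t) ^ ((m : ℝ) / lam) - 1)) x :=
      contDiffAt_const.mul ((contDiffAt_rpow_affine _ hx).sub contDiffAt_const)
    exact (Real.contDiff_exp.contDiffAt.comp x h1).contDiffWithinAt
  -- the scaled B
  set g : ℝ → ℝ := fun t => B ((m : ℝ) * t) with hg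
  have hmem : ∀ x ∈ s, (m : ℝ) * x ∈ s2 := by
    intro x hx
    have : lam / m * ((m : ℝ) * x) = lam * x := by field_simp
    simpa [hs2def, hsdef, this] using hx
  have hgc : ContDiffOn ℝ (⊤ : ℕ∞) g s := by
    intro x hx
    exact ((hBc.contDiffAt (hs2.mem_nhds (hmem x hx))).comp x (by fun_prop)).contDiffWithinAt
  intro n
  -- identify the generating function with A * g
  have hfun : (fun t : ℝ => (1 + lam * t) ^ ((r : ℝ) / lam) *
      Real.exp ((α / m) * ((1 + lam * t) ^ ((m : ℝ) / lam) - 1))) =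
      fun t => A t * g t := by
    funext t
    have : lam / m * ((m : ℝ) * t) = lam * t := by field_simp
    simp [hA, hg, hB, this]
  have hDn : D n = ∑ k ∈ Finset.range (n + 1),
      (n.choose k : ℝ) * (iteratedDeriv k A 0 * iteratedDeriv (n - k) g 0) := by
    rw [← hD n, hfun]
    exact leibniz_on hs hAc hgc n 0 h0s
  -- iterated derivatives of A at 0
  have hAval : ∀ j : ℕ, iteratedDeriv j A 0 = dfall lam (r : ℝ) j := by
    intro j
    have := rpow_iter lam ((r : ℝ) / lam) j 0 (by norm_num)
    rw [hA, this]
    simp only [mul_zero, add_zero, Real.one_rpow, mul_one]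
    refine Finset.prod_congr rfl fun i _ => ?_
    field_simp [dfall]
  -- iterated derivatives of g at 0
  have hgval : ∀ j : ℕ, iteratedDeriv j g 0 = (m : ℝ) ^ j * phi j := by
    intro j
    have := scale_iter hs2 hBc (m : ℝ) j 0 (by simpa using h0s2)
    rw [hg, this, mul_zero, hphi j]
  rw [hDn]
  rw [← Finset.sum_range_reflect]
  refine Finset.sum_congr rfl fun k hk => ?_
  have hkn : k ≤ n := by have := Finset.mem_range.mp hk; omega
  have h1 : n + 1 - 1 - k = n - k := by omega
  rw [h1, Nat.sub_sub_self hkn, hAval, hgval, Nat.choose_symm hkn]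
  ring
end

section
/- For n≥0 and X a Poisson random variable with mean α/m, D^{(r)}_{m,λ}(n,α) = Σ_{j=0}^n (Σ_{k=j}^n W^{(r)}_{m,λ}(n,k) m^k S_1(k,j)) φ_j(α/m). -/
open Finset

lemma tri_swap (k : ℕ) (f : ℕ → ℕ → ℝ) :
    ∑ i ∈ Finset.range (k + 1), ∑ j ∈ Finset.Icc i k, f i j
      = ∑ j ∈ Finset.range (k + 1), ∑ i ∈ Finset.range (j + 1), f i j := by
  rw [Finset.sum_comm' (t' := Finset.range (k + 1)) (s' := fun j => Finset.range (j + 1))]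
  intro a b
  simp only [Finset.mem_range, Finset.mem_Icc]
  omega

lemma ffall_nat_eq_zero {i i' : ℕ} (h : i < i') : ffall (i : ℝ) i' = 0 := by
  unfold ffall
  exact Finset.prod_eq_zero (Finset.mem_range.mpr h) (by simp)

lemma ffall_nat_self_pos (i : ℕ) : 0 < ffall (i : ℝ) i := by
  unfold ffall
  apply Finset.prod_pos
  intro t ht
  have := Finset.mem_range.mp ht
  have : (t : ℝ) < i := by exact_mod_cast this
  linarith

/-- If a combination of falling factorials vanishes for all x, its coefficients vanish. -/
lemma ffall_indep (k : ℕ) (c : ℕ → ℝ)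
    (h : ∀ x : ℝ, ∑ i ∈ Finset.range (k + 1), c i * ffall x i = 0) :
    ∀ i, i ≤ k → c i = 0 := by
  intro i
  induction i using Nat.strong_induction_on with
  | _ i IH =>
    intro hik
    have h1 := h (i : ℝ)
    have h2 : ∑ i' ∈ Finset.range (k + 1), c i' * ffall (i : ℝ) i'
        = ∑ i' ∈ Finset.range (i + 1), c i' * ffall (i : ℝ) i' := by
      symm
      apply Finset.sum_subset (Finset.range_subset_range.mpr (by omega))
      intro x hx hx'
      have : i < x := by
        simp only [Finset.mem_range] at hx'
        omega
      rw [ffall_nat_eq_zero this, mul_zero]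
    rw [h2, Finset.sum_range_succ] at h1
    have h3 : ∑ i' ∈ Finset.range i, c i' * ffall (i : ℝ) i' = 0 := by
      apply Finset.sum_eq_zero
      intro x hx
      have hxi := Finset.mem_range.mp hx
      rw [IH x hxi (by omega), zero_mul]
    rw [h3, zero_add] at h1
    exact (mul_eq_zero.mp h1).resolve_right (ffall_nat_self_pos i).ne'

lemma stirling_orth (S1 S2 : ℕ → ℕ → ℝ)
    (hS1 : ∀ (x : ℝ) (N : ℕ),
      ffall x N = ∑ k ∈ Finset.range (N + 1), S1 N k * x ^ k)
    (hS2 : ∀ (x : ℝ) (N : ℕ),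
      x ^ N = ∑ k ∈ Finset.range (N + 1), S2 N k * ffall x k)
    (k i : ℕ) (hik : i ≤ k) :
    (∑ j ∈ Finset.Icc i k, S1 k j * S2 j i) = if i = k then 1 else 0 := by
  have hzero : ∀ x : ℝ, ∑ i ∈ Finset.range (k + 1),
      ((∑ j ∈ Finset.Icc i k, S1 k j * S2 j i) - (if i = k then 1 else 0)) * ffall x i = 0 := by
    intro x
    have e1 : ∑ i ∈ Finset.range (k + 1),
        (∑ j ∈ Finset.Icc i k, S1 k j * S2 j i) * ffall x i = ffall x k := by
      calc ∑ i ∈ Finset.range (k + 1),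
            (∑ j ∈ Finset.Icc i k, S1 k j * S2 j i) * ffall x i
          = ∑ i ∈ Finset.range (k + 1), ∑ j ∈ Finset.Icc i k,
            S1 k j * S2 j i * ffall x i := by
            simp_rw [Finset.sum_mul]
        _ = ∑ j ∈ Finset.range (k + 1), ∑ i ∈ Finset.range (j + 1),
            S1 k j * S2 j i * ffall x i :=
            tri_swap k (fun i j => S1 k j * S2 j i * ffall x i)
        _ = ∑ j ∈ Finset.range (k + 1), S1 k j * x ^ j := by
            apply Finset.sum_congr rfl
            intro j _
            rw [hS2 x j, Finset.mul_sum]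
            apply Finset.sum_congr rfl
            intro i _
            ring
        _ = ffall x k := (hS1 x k).symm
    have e2 : ∑ i ∈ Finset.range (k + 1),
        (if i = k then (1:ℝ) else 0) * ffall x i = ffall x k := by
      simp [ite_mul]
    simp only [sub_mul, Finset.sum_sub_distrib, e1, e2, sub_self]
  have h := ffall_indep k _ hzero i hik
  linarith
theorem stmt8 (m : ℕ) (hm : 0 < m) (r : ℕ) (α lam : ℝ) (hα : 0 < α) (hlam : lam ≠ 0)
    (W : ℕ → ℕ → ℝ)
    (hW : ∀ (x : ℝ) (N : ℕ),
      dfall lam ((m : ℝ) * x + r) N = ∑ k ∈ Finset.range (N + 1), W N k * (m : ℝ) ^ k * ffall x k)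
    (S1 S2 : ℕ → ℕ → ℝ)
    (hS1 : ∀ (x : ℝ) (N : ℕ),
      ffall x N = ∑ k ∈ Finset.range (N + 1), S1 N k * x ^ k)
    (hS2 : ∀ (x : ℝ) (N : ℕ),
      x ^ N = ∑ k ∈ Finset.range (N + 1), S2 N k * ffall x k)
    (n : ℕ) :
    (∑ k ∈ Finset.range (n + 1), W n k * α ^ k)
      = ∑ j ∈ Finset.range (n + 1),
          (∑ k ∈ Finset.Icc j n, W n k * (m : ℝ) ^ k * S1 k j) *
          (∑ i ∈ Finset.range (j + 1), S2 j i * (α / m) ^ i) := by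
  have hm0 : (m : ℝ) ≠ 0 := Nat.cast_ne_zero.mpr hm.ne'
  set t : ℝ := α / m with ht
  have key : ∀ k, ∑ j ∈ Finset.range (k + 1),
      S1 k j * ∑ i ∈ Finset.range (j + 1), S2 j i * t ^ i = t ^ k := by
    intro k
    calc ∑ j ∈ Finset.range (k + 1), S1 k j * ∑ i ∈ Finset.range (j + 1), S2 j i * t ^ i
        = ∑ j ∈ Finset.range (k + 1), ∑ i ∈ Finset.range (j + 1),
            S1 k j * S2 j i * t ^ i := by
          simp_rw [Finset.mul_sum]
          apply Finset.sum_congr rfl; intro j _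
          apply Finset.sum_congr rfl; intro i _
          ring
      _ = ∑ i ∈ Finset.range (k + 1), ∑ j ∈ Finset.Icc i k,
            S1 k j * S2 j i * t ^ i :=
          (tri_swap k (fun i j => S1 k j * S2 j i * t ^ i)).symm
      _ = ∑ i ∈ Finset.range (k + 1), (if i = k then (1:ℝ) else 0) * t ^ i := by
          apply Finset.sum_congr rfl
          intro i hi
          rw [← Finset.sum_mul,
            stirling_orth S1 S2 hS1 hS2 k i (Nat.lt_succ_iff.mp (Finset.mem_range.mp hi))]
      _ = t ^ k := by simp [ite_mul]
  calc ∑ k ∈ Finset.range (n + 1), W n k * α ^ k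
      = ∑ k ∈ Finset.range (n + 1), W n k * (m : ℝ) ^ k * t ^ k := by
        apply Finset.sum_congr rfl
        intro k _
        rw [ht, div_pow, mul_assoc, mul_comm ((m:ℝ)^k), div_mul_cancel₀ _ (pow_ne_zero k hm0)]
    _ = ∑ k ∈ Finset.range (n + 1), W n k * (m : ℝ) ^ k *
          ∑ j ∈ Finset.range (k + 1),
            S1 k j * ∑ i ∈ Finset.range (j + 1), S2 j i * t ^ i := by
        apply Finset.sum_congr rfl
        intro k _
        rw [key k]
    _ = ∑ k ∈ Finset.range (n + 1), ∑ j ∈ Finset.range (k + 1),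
          W n k * (m : ℝ) ^ k * S1 k j * ∑ i ∈ Finset.range (j + 1), S2 j i * t ^ i := by
        apply Finset.sum_congr rfl; intro k _
        rw [Finset.mul_sum]
        apply Finset.sum_congr rfl; intro j _
        ring
    _ = ∑ j ∈ Finset.range (n + 1), ∑ k ∈ Finset.Icc j n,
          W n k * (m : ℝ) ^ k * S1 k j * ∑ i ∈ Finset.range (j + 1), S2 j i * t ^ i := by
        exact (tri_swap n (fun j k => W n k * (m : ℝ) ^ k * S1 k j *
          ∑ i ∈ Finset.range (j + 1), S2 j i * t ^ i)).symm
    _ = ∑ j ∈ Finset.range (n + 1),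
          (∑ k ∈ Finset.Icc j n, W n k * (m : ℝ) ^ k * S1 k j) *
          (∑ i ∈ Finset.range (j + 1), S2 j i * t ^ i) := by
        apply Finset.sum_congr rfl; intro j _
        rw [Finset.sum_mul]
end

section
/- For n ≥ 0, D^{(m)}_{m,λ}(n,α) = m^n Σ_{k=0}^n C_k(1; -α/m) S_{2,λ/m}(n,k), where D^{(m)}_{m,λ} is the degenerate m-Dowling polynomial and C_k(x;β) are the Charlier polynomials. -/
open Finset

open scoped ContDiff Topology

namespace Stmt12Aux


lemma natle (n : ℕ) : (n : WithTop ℕ∞) ≤ ∞ := by exact_mod_cast le_top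

lemma itdw_eq {s : Set ℝ} (hs : IsOpen s) {x : ℝ} (hx : x ∈ s) (f : ℝ → ℝ) (n : ℕ) :
    iteratedDerivWithin n f s x = iteratedDeriv n f x := by
  rw [iteratedDerivWithin, iteratedDeriv, iteratedFDerivWithin_of_isOpen n hs hx]

lemma itadd {s : Set ℝ} (hs : IsOpen s) {x : ℝ} (hx : x ∈ s) {f g : ℝ → ℝ}
    (hf : ContDiffOn ℝ ∞ f s) (hg : ContDiffOn ℝ ∞ g s) (n : ℕ) :
    iteratedDeriv n (fun t => f t + g t) x = iteratedDeriv n f x + iteratedDeriv n g x := by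
  rw [← itdw_eq hs hx, ← itdw_eq hs hx, ← itdw_eq hs hx]
  exact iteratedDerivWithin_add hx hs.uniqueDiffOn ((hf.of_le (natle n)).contDiffWithinAt hx) ((hg.of_le (natle n)).contDiffWithinAt hx)

lemma itsub {s : Set ℝ} (hs : IsOpen s) {x : ℝ} (hx : x ∈ s) {f g : ℝ → ℝ}
    (hf : ContDiffOn ℝ ∞ f s) (hg : ContDiffOn ℝ ∞ g s) (n : ℕ) :
    iteratedDeriv n (fun t => f t - g t) x = iteratedDeriv n f x - iteratedDeriv n g x := by
  rw [← itdw_eq hs hx, ← itdw_eq hs hx, ← itdw_eq hs hx]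
  exact iteratedDerivWithin_sub hx hs.uniqueDiffOn ((hf.of_le (natle n)).contDiffWithinAt hx) ((hg.of_le (natle n)).contDiffWithinAt hx)

lemma itcmul {s : Set ℝ} (hs : IsOpen s) {x : ℝ} (hx : x ∈ s) (c : ℝ) {f : ℝ → ℝ}
    (hf : ContDiffOn ℝ ∞ f s) (n : ℕ) :
    iteratedDeriv n (fun t => c * f t) x = c * iteratedDeriv n f x := by
  rw [← itdw_eq hs hx, ← itdw_eq hs hx]
  exact iteratedDerivWithin_const_mul hx hs.uniqueDiffOn c ((hf.of_le (natle n)).contDiffWithinAt hx)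

lemma itzero (n : ℕ) (x : ℝ) : iteratedDeriv n (fun _ : ℝ => (0:ℝ)) x = 0 := by
  induction n with
  | zero => simp
  | succ k ih => rw [iteratedDeriv_succ', deriv_const']; exact ih

lemma itsum {s : Set ℝ} (hs : IsOpen s) {x : ℝ} (hx : x ∈ s) (F : Finset ℕ) (f : ℕ → ℝ → ℝ)
    (h : ∀ i ∈ F, ContDiffOn ℝ ∞ (f i) s) (n : ℕ) :
    iteratedDeriv n (fun t => ∑ i ∈ F, f i t) x = ∑ i ∈ F, iteratedDeriv n (f i) x := by
  classical
  induction F using Finset.induction_on with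
  | empty => simpa using itzero n x
  | insert _ _ ha ih =>
    rename_i a F
    have hfun : (fun t => ∑ i ∈ insert a F, f i t) = fun t => f a t + ∑ i ∈ F, f i t := by
      funext t; rw [Finset.sum_insert ha]
    rw [hfun, Finset.sum_insert ha,
      itadd hs hx (h a (Finset.mem_insert_self a F))
        (ContDiffOn.sum fun i hi => h i (Finset.mem_insert_of_mem hi)) n,
      ih fun i hi => h i (Finset.mem_insert_of_mem hi)]



lemma hasDeriv_phi {lam : ℝ} (hlam : lam ≠ 0) {t : ℝ} (ht : 0 < 1 + lam * t) (c : ℝ) :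
    HasDerivAt (fun t : ℝ => (1 + lam * t) ^ (c / lam))
      (c * (1 + lam * t) ^ ((c - lam) / lam)) t := by
  have h1 : HasDerivAt (fun t : ℝ => 1 + lam * t) lam t := by
    simpa using (((hasDerivAt_id t).const_mul lam).const_add 1)
  have h2 := h1.rpow_const (p := c / lam) (Or.inl ht.ne')
  convert h2 using 1
  rw [show c / lam - 1 = (c - lam) / lam by field_simp]
  field_simp

lemma contDiffOn_phi (lam c : ℝ) :
    ContDiffOn ℝ ∞ (fun t : ℝ => (1 + lam * t) ^ (c / lam)) {t : ℝ | 0 < 1 + lam * t} := by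
  apply ContDiffOn.rpow_const_of_ne
  · exact (contDiff_const.add (contDiff_const.mul contDiff_id)).contDiffOn
  · exact fun t ht => ne_of_gt ht

lemma sopen (lam : ℝ) : IsOpen {t : ℝ | 0 < 1 + lam * t} :=
  isOpen_lt continuous_const (continuous_const.add (continuous_const.mul continuous_id))

lemma szero (lam : ℝ) : (0:ℝ) ∈ {t : ℝ | 0 < 1 + lam * t} := by
  simp

lemma itphi {lam : ℝ} (hlam : lam ≠ 0) : ∀ (n : ℕ) (a c : ℝ),
    iteratedDeriv n (fun t : ℝ => a * (1 + lam * t) ^ (c / lam)) 0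
      = a * ∏ i ∈ range n, (c - i * lam) := by
  intro n
  induction n with
  | zero => intro a c; simp [iteratedDeriv_zero]
  | succ n ih =>
    intro a c
    rw [iteratedDeriv_succ']
    have hev : deriv (fun t : ℝ => a * (1 + lam * t) ^ (c / lam))
        =ᶠ[𝓝 (0:ℝ)] fun t => (a * c) * (1 + lam * t) ^ ((c - lam) / lam) := by
      filter_upwards [(sopen lam).mem_nhds (szero lam)] with t ht
      rw [((hasDeriv_phi hlam ht c).const_mul a).deriv]
      ring
    rw [Filter.EventuallyEq.iteratedDeriv_eq n hev, ih (a * c) (c - lam),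
      Finset.prod_range_succ']
    have hp : ∏ i ∈ range n, (c - (↑(i + 1)) * lam) = ∏ i ∈ range n, (c - lam - (i:ℝ) * lam) :=
      Finset.prod_congr rfl fun i _ => by push_cast; ring
    rw [hp]
    push_cast
    ring



lemma keyA {lam : ℝ} (hlam : lam ≠ 0) (M : ℝ) : ∀ (N : ℕ) (H ψ : ℝ → ℝ),
    ContDiff ℝ ∞ H → ContDiffOn ℝ ∞ ψ {t : ℝ | 0 < 1 + lam * t} →
    (∀ i ≤ N, iteratedDeriv i H 1 = 0) →
    iteratedDeriv N (fun t => ψ t * H ((1 + lam * t) ^ (M / lam))) 0 = 0 := by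
  intro N
  induction N with
  | zero =>
    intro H ψ hH hψ hvan
    have h0 := hvan 0 le_rfl
    rw [iteratedDeriv_zero] at h0
    simp [iteratedDeriv_zero, Real.one_rpow, h0]
  | succ N ih =>
    intro H ψ hH hψ hvan
    have hso := sopen lam
    have h0s := szero lam
    rw [iteratedDeriv_succ']
    have hder : deriv (fun t => ψ t * H ((1 + lam * t) ^ (M / lam))) =ᶠ[𝓝 (0:ℝ)]
        fun t => deriv ψ t * H ((1 + lam * t) ^ (M / lam)) +
          (fun t => ψ t * (M * (1 + lam * t) ^ ((M - lam) / lam))) t *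
            deriv H ((1 + lam * t) ^ (M / lam)) := by
      filter_upwards [hso.mem_nhds h0s] with t ht
      have hg : HasDerivAt (fun t : ℝ => (1 + lam * t) ^ (M / lam))
          (M * (1 + lam * t) ^ ((M - lam) / lam)) t := hasDeriv_phi hlam ht M
      have hHd : HasDerivAt H (deriv H ((1 + lam * t) ^ (M / lam)))
          ((1 + lam * t) ^ (M / lam)) :=
        ((hH.differentiable (by simp)).differentiableAt).hasDerivAt
      have hcomp : HasDerivAt (fun t : ℝ => H ((1 + lam * t) ^ (M / lam)))
          (deriv H ((1 + lam * t) ^ (M / lam)) * (M * (1 + lam * t) ^ ((M - lam) / lam))) t :=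
        hHd.comp t hg
      have hψd : HasDerivAt ψ (deriv ψ t) t :=
        ((hψ.differentiableOn (by simp)).differentiableAt (hso.mem_nhds ht)).hasDerivAt
      refine ((hψd.mul hcomp).deriv).trans ?_
      ring
    rw [Filter.EventuallyEq.iteratedDeriv_eq N hder]
    have hHsm' : ContDiff ℝ ∞ (deriv H) := (contDiff_infty_iff_deriv.mp hH).2
    have hψ' : ContDiffOn ℝ ∞ (deriv ψ) {t : ℝ | 0 < 1 + lam * t} :=
      hψ.deriv_of_isOpen hso (by simp)
    have hgd : ContDiffOn ℝ ∞ (fun t : ℝ => ψ t * (M * (1 + lam * t) ^ ((M - lam) / lam)))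
        {t : ℝ | 0 < 1 + lam * t} :=
      hψ.mul (contDiffOn_const.mul (contDiffOn_phi lam (M - lam)))
    have hA : ContDiffOn ℝ ∞ (fun t => deriv ψ t * H ((1 + lam * t) ^ (M / lam)))
        {t : ℝ | 0 < 1 + lam * t} :=
      hψ'.mul (hH.comp_contDiffOn (contDiffOn_phi lam M))
    have hB : ContDiffOn ℝ ∞
        (fun t => (fun t => ψ t * (M * (1 + lam * t) ^ ((M - lam) / lam))) t *
          deriv H ((1 + lam * t) ^ (M / lam))) {t : ℝ | 0 < 1 + lam * t} :=
      hgd.mul (hHsm'.comp_contDiffOn (contDiffOn_phi lam M))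
    rw [itadd hso h0s hA hB N,
      ih H (deriv ψ) hH hψ' (fun i hi => hvan i (le_trans hi (Nat.le_succ N))),
      ih (deriv H) (fun t => ψ t * (M * (1 + lam * t) ^ ((M - lam) / lam))) hHsm' hgd
        (fun i hi => by rw [← iteratedDeriv_succ']; exact hvan (i + 1) (Nat.succ_le_succ hi)),
      add_zero]



lemma ffall_zero_of_lt {j k : ℕ} (h : j < k) : ffall (j:ℝ) k = 0 :=
  Finset.prod_eq_zero (Finset.mem_range.mpr h) (by simp)

lemma ffall_succ (j k : ℕ) : ffall (j:ℝ) (k+1) = j * ffall ((j - 1 : ℕ) : ℝ) k := by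
  cases j with
  | zero =>
    have h0 := ffall_zero_of_lt (show (0:ℕ) < k+1 from k.succ_pos)
    simp only [Nat.cast_zero] at h0 ⊢
    simp [h0]
  | succ j =>
    rw [ffall, Finset.prod_range_succ', ffall]
    have hp : ∏ i ∈ range k, (((j+1:ℕ):ℝ) - (↑(i + 1))) = ∏ i ∈ range k, (((j:ℕ):ℝ) - i) :=
      Finset.prod_congr rfl fun i _ => by push_cast; ring
    rw [hp]
    simp only [Nat.succ_sub_one]
    push_cast
    ring

lemma ffall_self : ∀ k : ℕ, ffall (k:ℝ) k = (k.factorial : ℝ) := by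
  intro k
  induction k with
  | zero => simp [ffall]
  | succ k ih =>
    rw [ffall_succ]
    simp only [Nat.succ_sub_one]
    rw [ih, Nat.factorial_succ]
    push_cast
    ring

lemma itpoly : ∀ (k j : ℕ) (c x : ℝ),
    iteratedDeriv k (fun u : ℝ => (u - c) ^ j) x = ffall (j:ℝ) k * (x - c) ^ (j - k) := by
  intro k
  induction k with
  | zero => intro j c x; simp [ffall]
  | succ k ih =>
    intro j c x
    rw [iteratedDeriv_succ']
    have hd : deriv (fun u : ℝ => (u - c) ^ j) = fun u => (j:ℝ) * (u - c) ^ (j - 1) := by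
      funext u
      have h : HasDerivAt (fun u : ℝ => (u - c) ^ j) ((j:ℝ) * (u - c) ^ (j-1) * 1) u :=
        ((hasDerivAt_id u).sub_const c).pow j
      rw [h.deriv, mul_one]
    have hcd : ContDiffOn ℝ ∞ (fun u : ℝ => (u - c) ^ (j-1)) Set.univ :=
      ((contDiff_id.sub contDiff_const).pow (j-1)).contDiffOn
    rw [hd, itcmul isOpen_univ (Set.mem_univ x) (j:ℝ) hcd k,
      ih (j-1) c x, ffall_succ j k, Nat.sub_sub, Nat.add_comm 1 k]
    ring

lemma sub_one_pow (u : ℝ) (i : ℕ) :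
    (u - 1) ^ i = ∑ j ∈ range (i+1), ((-1:ℝ) ^ (j + i) * (i.choose j : ℝ)) * u ^ j := by
  rw [sub_pow]
  exact Finset.sum_congr rfl fun j _ => by rw [one_pow]; ring

lemma master {s : Set ℝ} (hs : IsOpen s) {x : ℝ} (hx : x ∈ s) (G : ℝ → ℝ)
    (hG : ContDiffOn ℝ ∞ G s) (c : ℕ → ℝ) (N n : ℕ) :
    iteratedDeriv n (fun t => ∑ i ∈ range N, c i * (G t - 1) ^ i) x
      = ∑ i ∈ range N, c i * ∑ j ∈ range (i+1),
          ((-1:ℝ) ^ (j + i) * (i.choose j : ℝ)) * iteratedDeriv n (fun t => (G t) ^ j) x := by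
  have hpow : ∀ j : ℕ, ContDiffOn ℝ ∞ (fun t => (G t) ^ j) s := fun j => hG.pow j
  have h1 : (fun t => ∑ i ∈ range N, c i * (G t - 1) ^ i)
      = fun t => ∑ i ∈ range N, (fun i t => c i * ∑ j ∈ range (i+1),
          (fun j t => ((-1:ℝ) ^ (j + i) * (i.choose j : ℝ)) * (G t) ^ j) j t) i t := by
    funext t
    exact Finset.sum_congr rfl fun i _ => by rw [sub_one_pow]
  rw [h1, itsum hs hx _ _ (fun i _ => contDiffOn_const.mul (ContDiffOn.sum fun j _ =>
    contDiffOn_const.mul (hpow j))) n]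
  refine Finset.sum_congr rfl fun i _ => ?_
  rw [itcmul hs hx (c i) (ContDiffOn.sum fun j _ => contDiffOn_const.mul (hpow j)) n,
    itsum hs hx _ _ (fun j _ => contDiffOn_const.mul (hpow j)) n]
  congr 1
  exact Finset.sum_congr rfl fun j _ =>
    itcmul hs hx _ (hpow j) n


end Stmt12Aux

open Stmt12Aux in
theorem stmt12 (m : ℕ) (hm : 0 < m) (α lam : ℝ) (hlam : lam ≠ 0)
    (D : ℕ → ℝ)
    (hD : ∀ n : ℕ, iteratedDeriv n
        (fun t : ℝ => (1 + lam * t) ^ ((m : ℝ) / lam) *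
          Real.exp ((α / m) * ((1 + lam * t) ^ ((m : ℝ) / lam) - 1))) 0 = D n)
    (C : ℕ → ℝ)
    (hC : ∀ k : ℕ, iteratedDeriv k
        (fun t : ℝ => Real.exp ((α / m) * t) * (1 + t) ^ (1 : ℝ)) 0 = C k)
    (S : ℕ → ℕ → ℝ)
    (hS : ∀ (x : ℝ) (N : ℕ),
      dfall (lam / m) x N = ∑ k ∈ Finset.range (N + 1), S N k * ffall x k)
    (n : ℕ) :
    D n = (m : ℝ) ^ n * ∑ k ∈ Finset.range (n + 1), C k * S n k := by
  have hso := sopen lam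
  have h0s := szero lam
  have hm0 : (m:ℝ) ≠ 0 := Nat.cast_ne_zero.mpr hm.ne'
  obtain ⟨H1, hH1def⟩ : ∃ F : ℝ → ℝ,
      F = fun u : ℝ => Real.exp (α / ↑m * (u + -1)) * (1 + (u + -1)) := ⟨_, rfl⟩
  obtain ⟨H2, hH2def⟩ : ∃ F : ℝ → ℝ,
      F = fun u : ℝ => ∑ i ∈ range (n+1), (C i / (i.factorial : ℝ)) * (u - 1) ^ i := ⟨_, rfl⟩
  -- smoothness
  have hH1sm : ContDiff ℝ ∞ H1 := by rw [hH1def]; fun_prop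
  have hH2sm : ContDiff ℝ ∞ H2 := by
    rw [hH2def]
    exact ContDiff.sum fun i _ => contDiff_const.mul ((contDiff_id.sub contDiff_const).pow i)
  have hgsm : ContDiffOn ℝ ∞ (fun t : ℝ => (1 + lam * t) ^ ((m:ℝ) / lam))
      {t : ℝ | 0 < 1 + lam * t} := contDiffOn_phi lam (m:ℝ)
  -- derivatives of H1 at 1
  have hH1d : ∀ k : ℕ, iteratedDeriv k H1 1 = C k := by
    intro k
    have hCk := hC k
    have hfe : (fun t : ℝ => Real.exp (α / ↑m * t) * (1 + t) ^ (1:ℝ))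
        = fun t : ℝ => Real.exp (α / ↑m * t) * (1 + t) := by
      funext t; rw [Real.rpow_one]
    rw [hfe] at hCk
    have h := congrFun
      (iteratedDeriv_comp_add_const k (fun t : ℝ => Real.exp (α / ↑m * t) * (1 + t)) (-1)) 1
    rw [hH1def]
    rw [show (1:ℝ) + (-1) = 0 by norm_num] at h
    exact h.trans hCk
  -- derivatives of H2 at 1
  have hH2d : ∀ k ≤ n, iteratedDeriv k H2 1 = C k := by
    intro k hk
    have hsum : iteratedDeriv k H2 1 = ∑ i ∈ range (n+1),
        iteratedDeriv k (fun u : ℝ => (C i / (i.factorial : ℝ)) * (u - 1) ^ i) 1 := by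
      rw [hH2def]
      exact itsum isOpen_univ (Set.mem_univ (1:ℝ)) (range (n+1))
        (fun i u => (C i / (i.factorial : ℝ)) * (u - 1) ^ i)
        (fun i _ => contDiffOn_const.mul (((contDiff_id.sub contDiff_const).pow i).contDiffOn)) k
    rw [hsum]
    have hterm : ∀ i : ℕ, iteratedDeriv k (fun u : ℝ => (C i / (i.factorial : ℝ)) * (u - 1) ^ i) 1
        = (C i / (i.factorial : ℝ)) * (ffall (i:ℝ) k * ((1:ℝ) - 1) ^ (i - k)) := by
      intro i
      have hcd : ContDiffOn ℝ ∞ (fun u : ℝ => (u - 1) ^ i) Set.univ :=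
        ((contDiff_id.sub contDiff_const).pow i).contDiffOn
      rw [itcmul isOpen_univ (Set.mem_univ (1:ℝ)) _ hcd k, itpoly k i 1 1]
    rw [Finset.sum_congr rfl fun i _ => hterm i]
    rw [Finset.sum_eq_single_of_mem k (Finset.mem_range.mpr (Nat.lt_succ_of_le hk))]
    · rw [Nat.sub_self, pow_zero, ffall_self, mul_one]
      exact div_mul_cancel₀ (C k) (Nat.cast_ne_zero.mpr k.factorial_ne_zero)
    · intro b _ hbk
      rcases lt_or_gt_of_ne hbk with h | h
      · rw [ffall_zero_of_lt h]; ring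
      · rw [sub_self, zero_pow (Nat.sub_ne_zero_of_lt h)]; ring
  -- vanishing of H1 - H2 at 1 up to order n
  have hvan : ∀ i ≤ n, iteratedDeriv i (fun u => H1 u - H2 u) 1 = 0 := by
    intro i hi
    rw [itsub isOpen_univ (Set.mem_univ (1:ℝ)) hH1sm.contDiffOn hH2sm.contDiffOn i,
      hH1d i, hH2d i hi, sub_self]
  -- split the generating function
  have hsplit : (fun t : ℝ => (1 + lam * t) ^ ((m : ℝ) / lam) *
      Real.exp ((α / m) * ((1 + lam * t) ^ ((m : ℝ) / lam) - 1)))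
      = fun t => (H1 ((1 + lam * t) ^ ((m:ℝ) / lam)) - H2 ((1 + lam * t) ^ ((m:ℝ) / lam)))
          + H2 ((1 + lam * t) ^ ((m:ℝ) / lam)) := by
    funext t
    rw [hH1def, sub_eq_add_neg ((1 + lam * t) ^ ((m:ℝ) / lam)) 1]
    ring
  have hkey : iteratedDeriv n (fun t : ℝ => H1 ((1 + lam * t) ^ ((m:ℝ) / lam))
      - H2 ((1 + lam * t) ^ ((m:ℝ) / lam))) 0 = 0 := by
    have h := keyA hlam (m:ℝ) n (fun u => H1 u - H2 u) (fun _ => 1)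
      (hH1sm.sub hH2sm) contDiffOn_const hvan
    simpa using h
  have hsm1 : ContDiffOn ℝ ∞ (fun t : ℝ => H1 ((1 + lam * t) ^ ((m:ℝ) / lam))
      - H2 ((1 + lam * t) ^ ((m:ℝ) / lam))) {t : ℝ | 0 < 1 + lam * t} :=
    ((hH1sm.comp_contDiffOn hgsm).sub (hH2sm.comp_contDiffOn hgsm))
  have hsm2 : ContDiffOn ℝ ∞ (fun t : ℝ => H2 ((1 + lam * t) ^ ((m:ℝ) / lam)))
      {t : ℝ | 0 < 1 + lam * t} := hH2sm.comp_contDiffOn hgsm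
  -- value of iteratedDeriv n of g^j at 0
  have hgj : ∀ j : ℕ, iteratedDeriv n (fun t : ℝ => ((1 + lam * t) ^ ((m:ℝ) / lam)) ^ j) 0
      = (m:ℝ) ^ n * ∑ k ∈ range (n+1), S n k * ffall (j:ℝ) k := by
    intro j
    have hev : (fun t : ℝ => ((1 + lam * t) ^ ((m:ℝ) / lam)) ^ j)
        =ᶠ[𝓝 (0:ℝ)] fun t => (1:ℝ) * (1 + lam * t) ^ ((((j * m : ℕ)):ℝ) / lam) := by
      filter_upwards [hso.mem_nhds h0s] with t ht
      rw [one_mul, ← Real.rpow_natCast ((1 + lam * t) ^ ((m:ℝ) / lam)) j,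
        ← Real.rpow_mul (le_of_lt ht)]
      congr 1
      push_cast
      ring
    rw [Filter.EventuallyEq.iteratedDeriv_eq n hev, itphi hlam n 1 ((j * m : ℕ):ℝ), one_mul,
      ← hS (j:ℝ) n, dfall]
    have hdist : (m:ℝ) ^ n * ∏ i ∈ range n, ((j:ℝ) - ↑i * (lam / ↑m))
        = ∏ i ∈ range n, ((m:ℝ) * ((j:ℝ) - ↑i * (lam / ↑m))) := by
      rw [Finset.prod_mul_distrib, Finset.prod_const, Finset.card_range]
    rw [hdist]
    refine Finset.prod_congr rfl fun i _ => ?_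
    push_cast
    field_simp
  -- expansion of H2 ∘ g
  have hmast : iteratedDeriv n (fun t : ℝ => ∑ i ∈ range (n+1),
        (C i / (i.factorial : ℝ)) * ((1 + lam * t) ^ ((m:ℝ) / lam) - 1) ^ i) 0
      = ∑ i ∈ range (n+1), (C i / (i.factorial : ℝ)) * ∑ j ∈ range (i+1),
          ((-1:ℝ) ^ (j + i) * (i.choose j : ℝ)) *
            iteratedDeriv n (fun t : ℝ => ((1 + lam * t) ^ ((m:ℝ) / lam)) ^ j) 0 :=
    master hso h0s (fun t : ℝ => (1 + lam * t) ^ ((m:ℝ) / lam)) hgsm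
      (fun i => C i / (i.factorial : ℝ)) (n+1) n
  -- T_k = C k
  have hupow : ∀ (k j : ℕ), iteratedDeriv k (fun u : ℝ => u ^ j) 1 = ffall (j:ℝ) k := by
    intro k j
    have h := itpoly k j 0 1
    simp only [sub_zero, one_pow, mul_one] at h
    exact h
  have hTk : ∀ k ≤ n, ∑ i ∈ range (n+1), (C i / (i.factorial : ℝ)) * ∑ j ∈ range (i+1),
      ((-1:ℝ) ^ (j + i) * (i.choose j : ℝ)) * ffall (j:ℝ) k = C k := by
    intro k hk
    have hm2 : iteratedDeriv k (fun u : ℝ => ∑ i ∈ range (n+1),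
          (C i / (i.factorial : ℝ)) * (u - 1) ^ i) 1
        = ∑ i ∈ range (n+1), (C i / (i.factorial : ℝ)) * ∑ j ∈ range (i+1),
            ((-1:ℝ) ^ (j + i) * (i.choose j : ℝ)) * iteratedDeriv k (fun u : ℝ => u ^ j) 1 :=
      master isOpen_univ (Set.mem_univ (1:ℝ)) (fun u : ℝ => u) contDiffOn_id
        (fun i => C i / (i.factorial : ℝ)) (n+1) k
    rw [← hH2def] at hm2
    rw [hH2d k hk] at hm2
    simp only [hupow] at hm2
    exact hm2.symm
  -- final assembly
  rw [← hD n, hsplit, itadd hso h0s hsm1 hsm2 n, hkey, zero_add]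
  have hH2g : (fun t : ℝ => H2 ((1 + lam * t) ^ ((m:ℝ) / lam)))
      = fun t : ℝ => ∑ i ∈ range (n+1),
          (C i / (i.factorial : ℝ)) * ((1 + lam * t) ^ ((m:ℝ) / lam) - 1) ^ i := by
    funext t; rw [hH2def]
  rw [hH2g, hmast]
  rw [Finset.sum_congr rfl fun i _ => by
    rw [Finset.sum_congr rfl fun j (_ : j ∈ range (i+1)) => by rw [hgj j]]]
  -- now pure algebra
  have inner_swap : ∀ i ∈ range (n+1),
      (C i / (i.factorial : ℝ)) * ∑ j ∈ range (i+1), ((-1:ℝ) ^ (j + i) * (i.choose j : ℝ)) *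
          ((m:ℝ) ^ n * ∑ k ∈ range (n+1), S n k * ffall (j:ℝ) k)
      = ∑ k ∈ range (n+1), ((m:ℝ) ^ n * S n k) *
          ((C i / (i.factorial : ℝ)) * ∑ j ∈ range (i+1),
            ((-1:ℝ) ^ (j + i) * (i.choose j : ℝ)) * ffall (j:ℝ) k) := by
    intro i _
    simp only [Finset.mul_sum]
    rw [Finset.sum_comm]
    exact Finset.sum_congr rfl fun j _ => Finset.sum_congr rfl fun k _ => by ring
  rw [Finset.sum_congr rfl inner_swap, Finset.sum_comm]
  rw [Finset.sum_congr rfl fun k hk => (Finset.mul_sum _ _ _).symm]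
  rw [Finset.sum_congr rfl fun k hk => by
    rw [hTk k (Nat.lt_succ_iff.mp (Finset.mem_range.mp hk))]]
  rw [Finset.mul_sum]
  exact Finset.sum_congr rfl fun k _ => by ring
end

section
/- For n ≥ 0, D^{(r)}_{m,λ}(n,α) = m^n Σ_{k=0}^n C_k(r/m; -α/m) S_{2,λ/m}(n,k), where C_k(x;β) are the Charlier polynomials. -/
open Finset

open scoped ContDiff Topology
open Filter Set Finset
open scoped Nat

lemma itd_open_eq {n : ℕ} {f : ℝ → ℝ} {s : Set ℝ} {x : ℝ} (hs : IsOpen s) (hx : x ∈ s) :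
    iteratedDerivWithin n f s x = iteratedDeriv n f x := by
  rw [iteratedDerivWithin_eq_iteratedFDerivWithin, iteratedDeriv_eq_iteratedFDeriv,
    iteratedFDerivWithin_of_isOpen n hs hx]

lemma cdat_open {n : ℕ} {f : ℝ → ℝ} {x : ℝ} (hf : ContDiffAt ℝ n f x) :
    ∃ u : Set ℝ, IsOpen u ∧ x ∈ u ∧ ContDiffOn ℝ n f u := by
  obtain ⟨u, hu, hcd⟩ := hf.contDiffOn le_rfl (by simp)
  exact ⟨interior u, isOpen_interior, mem_interior_iff_mem_nhds.2 hu,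
    hcd.mono interior_subset⟩

lemma itd_add {n : ℕ} {f g : ℝ → ℝ} {x : ℝ} (hf : ContDiffAt ℝ n f x)
    (hg : ContDiffAt ℝ n g x) :
    iteratedDeriv n (fun t => f t + g t) x = iteratedDeriv n f x + iteratedDeriv n g x := by
  obtain ⟨u, hu, hxu, hfu⟩ := cdat_open hf
  obtain ⟨v, hv, hxv, hgv⟩ := cdat_open hg
  have ho : IsOpen (u ∩ v) := hu.inter hv
  have hx' : x ∈ u ∩ v := ⟨hxu, hxv⟩
  rw [← itd_open_eq (f := fun t => f t + g t) ho hx', ← itd_open_eq (f := f) ho hx',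
    ← itd_open_eq (f := g) ho hx']
  exact iteratedDerivWithin_add hx' ho.uniqueDiffOn ((hfu.mono inter_subset_left) x hx')
    ((hgv.mono inter_subset_right) x hx')

lemma itd_const_mul {n : ℕ} {f : ℝ → ℝ} {x : ℝ} (c : ℝ) (hf : ContDiffAt ℝ n f x) :
    iteratedDeriv n (fun t => c * f t) x = c * iteratedDeriv n f x := by
  obtain ⟨u, hu, hxu, hfu⟩ := cdat_open hf
  rw [← itd_open_eq (f := fun t => c * f t) hu hxu, ← itd_open_eq (f := f) hu hxu]
  exact iteratedDerivWithin_const_mul hxu hu.uniqueDiffOn c (hfu x hxu)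

lemma itd_sum {n : ℕ} {x : ℝ} {ι : Type*} (s : Finset ι) (f : ι → ℝ → ℝ)
    (hf : ∀ i ∈ s, ContDiffAt ℝ n (f i) x) :
    iteratedDeriv n (fun t => ∑ i ∈ s, f i t) x = ∑ i ∈ s, iteratedDeriv n (f i) x := by
  classical
  induction s using Finset.induction_on with
  | empty =>
    have : iteratedDeriv n (fun _ : ℝ => (0:ℝ)) x = 0 := by
      induction n with
      | zero => simp
      | succ n IH => rw [iteratedDeriv_succ']; simpa using IH
    simpa using this
  | insert _ _ hni IH =>
    rename_i a s
    simp only [Finset.sum_insert hni]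
    rw [itd_add (hf a (Finset.mem_insert_self a s))
      (ContDiffAt.sum fun i hi => hf i (Finset.mem_insert_of_mem hi)),
      IH fun i hi => hf i (Finset.mem_insert_of_mem hi)]

lemma itd_pow (k : ℕ) : ∀ i : ℕ, iteratedDeriv i (fun u : ℝ => u ^ k)
    = fun u => (∏ j ∈ Finset.range i, ((k : ℝ) - j)) * u ^ (k - i)
  | 0 => by simp
  | (i + 1) => by
    rw [iteratedDeriv_succ, itd_pow k i]
    funext u
    rw [deriv_const_mul _ (differentiableAt_pow _), deriv_pow_field]
    rw [Finset.prod_range_succ, Nat.sub_sub]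
    rcases le_or_gt i k with h | h
    · have hc : ((k - i : ℕ) : ℝ) = (k : ℝ) - i := by push_cast [h]; ring
      rw [hc]; ring
    · have h0 : (∏ j ∈ Finset.range i, ((k : ℝ) - j)) = 0 :=
        Finset.prod_eq_zero (Finset.mem_range.2 h) (by simp)
      simp [h0]

lemma prod_range_sub_nat (k : ℕ) : (∏ j ∈ Finset.range k, (k - j)) = k ! := by
  induction k with
  | zero => simp
  | succ k IH =>
    rw [Finset.prod_range_succ']
    simp only [Nat.succ_sub_succ_eq_sub, Nat.sub_zero]
    rw [IH, Nat.factorial_succ]; ring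

lemma prod_range_sub_cast (k : ℕ) : (∏ j ∈ Finset.range k, ((k : ℝ) - j)) = (k ! : ℝ) := by
  rw [← prod_range_sub_nat k, Nat.cast_prod]
  refine Finset.prod_congr rfl fun j hj => ?_
  rw [Nat.cast_sub (le_of_lt (Finset.mem_range.1 hj))]

lemma itd_monomial (i k : ℕ) :
    iteratedDeriv i (fun u : ℝ => u ^ k) 0 = if i = k then (k ! : ℝ) else 0 := by
  rw [itd_pow k i]
  rcases lt_trichotomy i k with h | h | h
  · have : (0:ℝ) ^ (k - i) = 0 := zero_pow (Nat.sub_ne_zero_of_lt h)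
    simp [this, Nat.ne_of_lt h]
  · subst h
    simp [prod_range_sub_cast]
  · have h0 : (∏ j ∈ Finset.range i, ((k : ℝ) - j)) = 0 :=
      Finset.prod_eq_zero (Finset.mem_range.2 h) (by simp)
    simp [h0, Nat.ne_of_gt h]

lemma key_vanish {U V : Set ℝ} (hU : IsOpen U) (hV : IsOpen V) (h0U : (0:ℝ) ∈ U)
    {h : ℝ → ℝ} (hhU : ContDiffOn ℝ ∞ h U) (hmap : ∀ t ∈ U, h t ∈ V) (hh0 : h 0 = 0) :
    ∀ j : ℕ, ∀ G ψ : ℝ → ℝ, ContDiffOn ℝ ∞ G V → ContDiffOn ℝ ∞ ψ U →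
      (∀ i ≤ j, iteratedDeriv i G 0 = 0) →
      iteratedDeriv j (fun t => G (h t) * ψ t) 0 = 0 := by
  have h0V : (0:ℝ) ∈ V := hh0 ▸ hmap 0 h0U
  intro j
  induction j with
  | zero =>
    intro G ψ hG hψ hvan
    have := hvan 0 le_rfl
    rw [iteratedDeriv_zero] at this
    simp [iteratedDeriv_zero, hh0, this]
  | succ j IH =>
    intro G ψ hG hψ hvan
    -- smoothness of deriv G on V, deriv ψ, deriv h on U
    have hinf : (∞ : WithTop ℕ∞) + 1 ≤ ∞ := by
      rw [show (∞ : WithTop ℕ∞) + 1 = ∞ from rfl]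
    have hG' : ContDiffOn ℝ ∞ (deriv G) V := hG.deriv_of_isOpen hV hinf
    have hψ' : ContDiffOn ℝ ∞ (deriv ψ) U := hψ.deriv_of_isOpen hU hinf
    have hh' : ContDiffOn ℝ ∞ (deriv h) U := hhU.deriv_of_isOpen hU hinf
    -- derivative formula on U
    have hder : ∀ t ∈ U, deriv (fun t => G (h t) * ψ t) t
        = deriv G (h t) * (deriv h t * ψ t) + G (h t) * deriv ψ t := by
      intro t htU
      have hht : HasDerivAt h (deriv h t) t :=
        ((hhU.contDiffAt (hU.mem_nhds htU)).differentiableAt (by norm_num)).hasDerivAt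
      have hGt : HasDerivAt G (deriv G (h t)) (h t) :=
        ((hG.contDiffAt (hV.mem_nhds (hmap t htU))).differentiableAt
          (by norm_num)).hasDerivAt
      have hψt : HasDerivAt ψ (deriv ψ t) t :=
        ((hψ.contDiffAt (hU.mem_nhds htU)).differentiableAt (by norm_num)).hasDerivAt
      have hcomp : HasDerivAt (fun t => G (h t)) (deriv G (h t) * deriv h t) t :=
        hGt.comp t hht
      have := hcomp.mul hψt
      exact this.deriv.trans (by ring)
    have heq : deriv (fun t => G (h t) * ψ t) =ᶠ[𝓝 (0:ℝ)]
        fun t => deriv G (h t) * (deriv h t * ψ t) + G (h t) * deriv ψ t :=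
      Filter.eventually_of_mem (hU.mem_nhds h0U) hder
    rw [iteratedDeriv_succ', heq.iteratedDeriv_eq j]
    -- split the sum
    have hcA : ContDiffAt ℝ j (fun t => deriv G (h t) * (deriv h t * ψ t)) 0 := by
      have h1 : ContDiffAt ℝ j (deriv G) (h 0) :=
        (hG'.contDiffAt (hV.mem_nhds (hmap 0 h0U))).of_le (by exact_mod_cast le_top)
      have h2 : ContDiffAt ℝ j h 0 :=
        (hhU.contDiffAt (hU.mem_nhds h0U)).of_le (by exact_mod_cast le_top)
      have h3 : ContDiffAt ℝ j (deriv h) 0 :=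
        (hh'.contDiffAt (hU.mem_nhds h0U)).of_le (by exact_mod_cast le_top)
      have h4 : ContDiffAt ℝ j ψ 0 :=
        (hψ.contDiffAt (hU.mem_nhds h0U)).of_le (by exact_mod_cast le_top)
      exact (h1.comp 0 h2).mul (h3.mul h4)
    have hcB : ContDiffAt ℝ j (fun t => G (h t) * deriv ψ t) 0 := by
      have h1 : ContDiffAt ℝ j G (h 0) :=
        (hG.contDiffAt (hV.mem_nhds (hmap 0 h0U))).of_le (by exact_mod_cast le_top)
      have h2 : ContDiffAt ℝ j h 0 :=
        (hhU.contDiffAt (hU.mem_nhds h0U)).of_le (by exact_mod_cast le_top)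
      have h3 : ContDiffAt ℝ j (deriv ψ) 0 :=
        (hψ'.contDiffAt (hU.mem_nhds h0U)).of_le (by exact_mod_cast le_top)
      exact (h1.comp 0 h2).mul h3
    rw [itd_add hcA hcB]
    have hA : iteratedDeriv j (fun t => deriv G (h t) * (deriv h t * ψ t)) 0 = 0 := by
      refine IH (deriv G) (fun t => deriv h t * ψ t) hG' (hh'.mul hψ) ?_
      intro i hi
      have : iteratedDeriv i (deriv G) = iteratedDeriv (i+1) G := (iteratedDeriv_succ' ..).symm
      rw [this]
      exact hvan (i+1) (by omega)
    have hB : iteratedDeriv j (fun t => G (h t) * deriv ψ t) 0 = 0 := by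
      refine IH G (deriv ψ) hG hψ' ?_
      intro i hi
      exact hvan i (by omega)
    rw [hA, hB, add_zero]

lemma itd_comp_expand {U V : Set ℝ} (hU : IsOpen U) (hV : IsOpen V) (h0U : (0:ℝ) ∈ U)
    {h g : ℝ → ℝ} (hhU : ContDiffOn ℝ ∞ h U) (hmap : ∀ t ∈ U, h t ∈ V) (hh0 : h 0 = 0)
    (hg : ContDiffOn ℝ ∞ g V) (n : ℕ) :
    iteratedDeriv n (fun t => g (h t)) 0
      = ∑ k ∈ Finset.range (n+1),
          (iteratedDeriv k g 0 / (k ! : ℝ)) * iteratedDeriv n (fun t => (h t)^k) 0 := by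
  have h0V : (0:ℝ) ∈ V := hh0 ▸ hmap 0 h0U
  set c : ℕ → ℝ := fun k => iteratedDeriv k g 0 / (k ! : ℝ) with hc
  set P : ℝ → ℝ := fun u => ∑ k ∈ Finset.range (n+1), c k * u ^ k with hP
  have hPc : ContDiff ℝ ∞ P := by
    apply ContDiff.sum
    intro k _
    exact contDiff_const.mul (contDiff_id.pow k)
  have hPder : ∀ i, i ≤ n → iteratedDeriv i P 0 = c i * (i ! : ℝ) := by
    intro i hi
    rw [hP]
    rw [itd_sum (Finset.range (n+1)) (fun k => fun u => c k * u ^ k)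
      (fun k _ => (contDiff_const.mul (contDiff_id.pow k)).contDiffAt)]
    have : ∀ k ∈ Finset.range (n+1),
        iteratedDeriv i (fun u => c k * u ^ k) 0 = if i = k then c k * (k ! : ℝ) else 0 := by
      intro k _
      have hmon : ContDiffAt ℝ i (fun u : ℝ => u ^ k) 0 := (contDiff_id.pow k).contDiffAt
      rw [itd_const_mul (c k) hmon, itd_monomial]
      split <;> simp
    rw [Finset.sum_congr rfl this]
    rw [Finset.sum_ite_eq (Finset.range (n+1)) i (fun k => c k * (k ! : ℝ))]
    simp [Nat.lt_succ_of_le hi]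
  set G : ℝ → ℝ := fun u => g u - P u with hG
  have hGc : ContDiffOn ℝ ∞ G V := hg.sub (hPc.contDiffOn)
  have hGvan : ∀ i, i ≤ n → iteratedDeriv i G 0 = 0 := by
    intro i hi
    have hgi : ContDiffAt ℝ i g 0 := (hg.contDiffAt (hV.mem_nhds h0V)).of_le
      (by exact_mod_cast le_top)
    have hGeq : G = fun u => g u + (-1 : ℝ) * P u := by funext u; rw [hG]; ring
    have hPi : ContDiffAt ℝ i P 0 := hPc.contDiffAt.of_le (by exact_mod_cast le_top)
    rw [hGeq, itd_add hgi (contDiffAt_const.mul hPi),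
      itd_const_mul (-1 : ℝ) hPi, hPder i hi, hc]
    have : (i ! : ℝ) ≠ 0 := by exact_mod_cast Nat.factorial_ne_zero i
    field_simp
    ring
  have hzero : iteratedDeriv n (fun t => G (h t)) 0 = 0 := by
    have := key_vanish hU hV h0U hhU hmap hh0 n G (fun _ => 1) hGc contDiffOn_const
      (fun i hi => hGvan i hi)
    simpa using this
  have hsplit : (fun t => g (h t)) = fun t => G (h t) + P (h t) := by
    funext t; rw [hG]; ring
  have hcA : ContDiffAt ℝ n (fun t => G (h t)) 0 := by
    have h1 : ContDiffAt ℝ n G (h 0) :=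
      (hGc.contDiffAt (hV.mem_nhds (hmap 0 h0U))).of_le (by exact_mod_cast le_top)
    have h2 : ContDiffAt ℝ n h 0 :=
      (hhU.contDiffAt (hU.mem_nhds h0U)).of_le (by exact_mod_cast le_top)
    exact h1.comp 0 h2
  have h2 : ContDiffAt ℝ n h 0 :=
    (hhU.contDiffAt (hU.mem_nhds h0U)).of_le (by exact_mod_cast le_top)
  have hPn : ContDiffAt ℝ n P (h 0) := hPc.contDiffAt.of_le (by exact_mod_cast le_top)
  have hcB : ContDiffAt ℝ n (fun t => P (h t)) 0 := hPn.comp 0 h2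
  rw [hsplit, itd_add hcA hcB, hzero, zero_add]
  have : (fun t => P (h t)) = fun t => ∑ k ∈ Finset.range (n+1), c k * (h t) ^ k := by
    funext t; rw [hP]
  rw [this, itd_sum (Finset.range (n+1)) (fun k => fun t => c k * (h t) ^ k)
    (fun k _ => contDiffAt_const.mul (h2.pow k))]
  refine Finset.sum_congr rfl fun k _ => ?_
  rw [itd_const_mul (c k) (h2.pow k)]

lemma itd_rpow_on (lam c : ℝ) (n : ℕ) :
    Set.EqOn (iteratedDeriv n (fun t : ℝ => (1 + lam * t) ^ c))
      (fun t => (∏ i ∈ Finset.range n, (c - i)) * lam ^ n * (1 + lam * t) ^ (c - n))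
      {t : ℝ | 0 < 1 + lam * t} := by
  induction n with
  | zero => intro t ht; simp
  | succ n IH =>
    intro t ht
    have hU : IsOpen {t : ℝ | 0 < 1 + lam * t} :=
      isOpen_lt continuous_const (by continuity)
    have hev : iteratedDeriv n (fun t : ℝ => (1 + lam * t) ^ c) =ᶠ[𝓝 t]
        fun t => (∏ i ∈ Finset.range n, (c - i)) * lam ^ n * (1 + lam * t) ^ (c - n) :=
      Filter.eventually_of_mem (hU.mem_nhds ht) IH
    rw [iteratedDeriv_succ, hev.deriv_eq]
    have hbase : HasDerivAt (fun t : ℝ => 1 + lam * t) lam t := by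
      simpa using ((hasDerivAt_id t).const_mul lam).const_add 1
    have hr : HasDerivAt (fun t : ℝ => (1 + lam * t) ^ (c - n))
        (lam * (c - n) * (1 + lam * t) ^ (c - n - 1)) t :=
      hbase.rpow_const (Or.inl (ne_of_gt ht))
    have hd := (hr.const_mul ((∏ i ∈ Finset.range n, (c - i)) * lam ^ n)).deriv
    rw [hd]
    have hexp : c - ((n : ℝ) + 1) = c - n - 1 := by ring
    rw [Finset.prod_range_succ, pow_succ]
    push_cast
    rw [hexp]
    ring

lemma itd_rpow_zero (lam c : ℝ) (n : ℕ) :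
    iteratedDeriv n (fun t : ℝ => (1 + lam * t) ^ c) 0
      = (∏ i ∈ Finset.range n, (c - i)) * lam ^ n := by
  have h0 : (0:ℝ) ∈ {t : ℝ | 0 < 1 + lam * t} := by norm_num
  have := itd_rpow_on lam c n h0
  simp only [mul_zero, add_zero, Real.one_rpow] at this
  simpa using this

lemma contDiffOn_rpow_affine (lam c : ℝ) :
    ContDiffOn ℝ ∞ (fun t : ℝ => (1 + lam * t) ^ c) {t : ℝ | 0 < 1 + lam * t} := by
  intro t ht
  apply ContDiffAt.contDiffWithinAt
  have hb : ContDiffAt ℝ ∞ (fun t : ℝ => 1 + lam * t) t :=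
    contDiffAt_const.add (contDiffAt_const.mul contDiffAt_id)
  exact hb.rpow_const_of_ne (ne_of_gt ht)

lemma ffall_nat_eq_zero_s14 {j k : ℕ} (h : j < k) : ffall (j : ℝ) k = 0 :=
  Finset.prod_eq_zero (Finset.mem_range.2 h) (by simp)

lemma ffall_nat_ne_zero (k : ℕ) : ffall (k : ℝ) k ≠ 0 := by
  refine ne_of_gt (Finset.prod_pos fun i hi => ?_)
  have := Finset.mem_range.1 hi
  have : (i : ℝ) < (k : ℝ) := by exact_mod_cast this
  linarith

lemma ffall_unique (n : ℕ) (a : ℕ → ℝ)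
    (h : ∀ x : ℝ, ∑ k ∈ Finset.range (n+1), a k * ffall x k = 0) :
    ∀ k, k ≤ n → a k = 0 := by
  intro k
  induction k using Nat.strong_induction_on with
  | _ k IH =>
    intro hk
    have hx := h (k : ℝ)
    have hsingle : ∑ k' ∈ Finset.range (n+1), a k' * ffall (k:ℝ) k'
        = a k * ffall (k:ℝ) k := by
      apply Finset.sum_eq_single_of_mem k (Finset.mem_range.2 (by omega))
      intro k' _ hne
      rcases lt_or_gt_of_ne hne with hlt | hgt
      · rw [IH k' hlt (by omega)]; ring
      · rw [ffall_nat_eq_zero_s14 hgt]; ring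
    rw [hsingle] at hx
    exact (mul_eq_zero.1 hx).resolve_right (ffall_nat_ne_zero k)

theorem stmt14 (m : ℕ) (hm : 0 < m) (r : ℕ) (α lam : ℝ) (hlam : lam ≠ 0)
    (D : ℕ → ℝ)
    (hD : ∀ n : ℕ, iteratedDeriv n
        (fun t : ℝ => (1 + lam * t) ^ ((r : ℝ) / lam) *
          Real.exp ((α / m) * ((1 + lam * t) ^ ((m : ℝ) / lam) - 1))) 0 = D n)
    (C : ℕ → ℝ)
    (hC : ∀ k : ℕ, iteratedDeriv k
        (fun t : ℝ => Real.exp ((α / m) * t) * (1 + t) ^ ((r : ℝ) / m)) 0 = C k)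
    (S : ℕ → ℕ → ℝ)
    (hS : ∀ (x : ℝ) (N : ℕ),
      dfall (lam / m) x N = ∑ k ∈ Finset.range (N + 1), S N k * ffall x k)
    (n : ℕ) :
    D n = (m : ℝ) ^ n * ∑ k ∈ Finset.range (n + 1), C k * S n k := by
  have hm0 : (m : ℝ) ≠ 0 := Nat.cast_ne_zero.2 hm.ne'
  set U : Set ℝ := {t : ℝ | 0 < 1 + lam * t} with hUdef
  have hU : IsOpen U := isOpen_lt continuous_const (by continuity)
  have h0U : (0:ℝ) ∈ U := by show (0:ℝ) < 1 + lam * 0; norm_num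
  set V : Set ℝ := {u : ℝ | 0 < 1 + u} with hVdef
  have hV : IsOpen V := isOpen_lt continuous_const (by continuity)
  set h : ℝ → ℝ := fun t => (1 + lam * t) ^ ((m : ℝ) / lam) - 1 with hhdef
  have hh : ContDiffOn ℝ ∞ h U :=
    (contDiffOn_rpow_affine lam ((m : ℝ) / lam)).sub contDiffOn_const
  have hh0 : h 0 = 0 := by
    show (1 + lam * 0) ^ ((m : ℝ) / lam) - 1 = 0
    norm_num
  have h1h : ∀ t, 1 + h t = (1 + lam * t) ^ ((m : ℝ) / lam) := by
    intro t
    show 1 + ((1 + lam * t) ^ ((m : ℝ) / lam) - 1) = _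
    ring
  have hmap : ∀ t ∈ U, h t ∈ V := by
    intro t ht
    have ht' : (0:ℝ) < 1 + lam * t := ht
    have hp : (0:ℝ) < (1 + lam * t) ^ ((m : ℝ) / lam) := Real.rpow_pos_of_pos ht' _
    show (0:ℝ) < 1 + h t
    rw [h1h t]; exact hp
  -- values of iterated derivatives of (1+u)^x at 0
  have hffall : ∀ (x : ℝ) (k : ℕ),
      iteratedDeriv k (fun u : ℝ => (1 + u) ^ x) 0 = ffall x k := by
    intro x k
    have he : (fun u : ℝ => (1 + u) ^ x) = fun t : ℝ => (1 + 1 * t) ^ x := by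
      funext u; rw [one_mul]
    rw [he, itd_rpow_zero 1 x k, one_pow, mul_one]
    rfl
  have hgx : ∀ x : ℝ, ContDiffOn ℝ ∞ (fun u : ℝ => (1 + u) ^ x) V := by
    intro x u hu
    have hu' : (0:ℝ) < 1 + u := hu
    exact ((contDiffAt_const.add contDiffAt_id).rpow_const_of_ne
      (ne_of_gt hu')).contDiffWithinAt
  -- step 1: identification of iteratedDeriv n (h^k) 0
  have hstep : ∀ x : ℝ, (m:ℝ)^n * dfall (lam / m) x n
      = ∑ k ∈ Finset.range (n+1),
          (ffall x k / (k ! : ℝ)) * iteratedDeriv n (fun t => (h t)^k) 0 := by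
    intro x
    have hcomp : ∀ t ∈ U,
        (fun u : ℝ => (1 + u) ^ x) (h t) = (1 + lam * t) ^ ((m:ℝ) * x / lam) := by
      intro t ht
      have ht' : (0:ℝ) < 1 + lam * t := ht
      show (1 + h t) ^ x = _
      rw [h1h t, ← Real.rpow_mul (le_of_lt ht')]
      congr 1
      ring
    have hev : iteratedDeriv n (fun t => (fun u : ℝ => (1 + u) ^ x) (h t)) 0
        = iteratedDeriv n (fun t : ℝ => (1 + lam * t) ^ ((m:ℝ) * x / lam)) 0 :=
      Filter.EventuallyEq.iteratedDeriv_eq n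
        (Filter.eventually_of_mem (hU.mem_nhds h0U) hcomp)
    have hexp := itd_comp_expand hU hV h0U hh hmap hh0 (hgx x) n
    have hval : iteratedDeriv n (fun t : ℝ => (1 + lam * t) ^ ((m:ℝ) * x / lam)) 0
        = (∏ i ∈ Finset.range n, ((m:ℝ) * x / lam - i)) * lam ^ n :=
      itd_rpow_zero lam _ n
    have halg : (∏ i ∈ Finset.range n, ((m:ℝ) * x / lam - i)) * lam ^ n
        = (m:ℝ)^n * dfall (lam / m) x n := by
      have h1 : ∀ i ∈ Finset.range n,
          ((m:ℝ) * x / lam - i) * lam = (m:ℝ) * (x - i * (lam / m)) := by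
        intro i _; field_simp
      calc (∏ i ∈ Finset.range n, ((m:ℝ) * x / lam - i)) * lam ^ n
          = ∏ i ∈ Finset.range n, (((m:ℝ) * x / lam - i) * lam) := by
            rw [Finset.prod_mul_distrib, Finset.prod_const, Finset.card_range]
        _ = ∏ i ∈ Finset.range n, ((m:ℝ) * (x - i * (lam / m))) :=
            Finset.prod_congr rfl h1
        _ = (m:ℝ)^n * dfall (lam / m) x n := by
            rw [Finset.prod_mul_distrib, Finset.prod_const, Finset.card_range]
            rfl
    rw [← halg, ← hval, ← hev, hexp]
    refine Finset.sum_congr rfl fun k _ => ?_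
    rw [hffall x k]
  have hAk : ∀ k, k ≤ n → iteratedDeriv n (fun t => (h t)^k) 0
      = (k ! : ℝ) * ((m:ℝ)^n * S n k) := by
    have hzero : ∀ x : ℝ, ∑ k ∈ Finset.range (n+1),
        (iteratedDeriv n (fun t => (h t)^k) 0 / (k ! : ℝ) - (m:ℝ)^n * S n k)
          * ffall x k = 0 := by
      intro x
      have h1 := hstep x
      have h2 := hS x n
      have e : ∑ k ∈ Finset.range (n+1),
          (iteratedDeriv n (fun t => (h t)^k) 0 / (k ! : ℝ) - (m:ℝ)^n * S n k)
            * ffall x k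
          = (∑ k ∈ Finset.range (n+1),
              (ffall x k / (k ! : ℝ)) * iteratedDeriv n (fun t => (h t)^k) 0)
            - (m:ℝ)^n * ∑ k ∈ Finset.range (n+1), S n k * ffall x k := by
        rw [Finset.mul_sum, ← Finset.sum_sub_distrib]
        exact Finset.sum_congr rfl fun k _ => by ring
      rw [e, ← h1, ← h2, sub_self]
    have huniq := ffall_unique n _ hzero
    intro k hk
    have hz := huniq k hk
    have hfact : (k ! : ℝ) ≠ 0 := Nat.cast_ne_zero.2 (Nat.factorial_ne_zero k)
    have : iteratedDeriv n (fun t => (h t)^k) 0 / (k ! : ℝ) = (m:ℝ)^n * S n k := by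
      linarith
    field_simp at this
    rw [this]; ring
  -- conclusion
  set g : ℝ → ℝ := fun u : ℝ => Real.exp ((α / m) * u) * (1 + u) ^ ((r : ℝ) / m)
    with hgdef
  have hgV : ContDiffOn ℝ ∞ g V := by
    intro u hu
    have hu' : (0:ℝ) < 1 + u := hu
    have he : ContDiffAt ℝ ∞ (fun u : ℝ => Real.exp ((α / m) * u)) u :=
      (Real.contDiff_exp.comp (contDiff_const.mul contDiff_id)).contDiffAt
    exact (he.mul ((contDiffAt_const.add contDiffAt_id).rpow_const_of_ne
      (ne_of_gt hu'))).contDiffWithinAt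
  have hfeq : ∀ t ∈ U, g (h t)
      = (1 + lam * t) ^ ((r : ℝ) / lam) *
          Real.exp ((α / m) * ((1 + lam * t) ^ ((m : ℝ) / lam) - 1)) := by
    intro t ht
    have ht' : (0:ℝ) < 1 + lam * t := ht
    show Real.exp ((α / m) * h t) * (1 + h t) ^ ((r : ℝ) / m) = _
    rw [h1h t, ← Real.rpow_mul (le_of_lt ht')]
    have hexp2 : (m : ℝ) / lam * ((r : ℝ) / m) = (r : ℝ) / lam := by
      field_simp
    rw [hexp2, hhdef, mul_comm]
  have hDg : D n = iteratedDeriv n (fun t => g (h t)) 0 := by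
    rw [← hD n]
    exact (Filter.EventuallyEq.iteratedDeriv_eq n
      (Filter.eventually_of_mem (hU.mem_nhds h0U) hfeq)).symm
  rw [hDg, itd_comp_expand hU hV h0U hh hmap hh0 hgV n, Finset.mul_sum]
  refine Finset.sum_congr rfl fun k hk => ?_
  have hk' : k ≤ n := by
    have := Finset.mem_range.1 hk; omega
  rw [hC k, hAk k hk']
  have hfact : (k ! : ℝ) ≠ 0 := Nat.cast_ne_zero.2 (Nat.factorial_ne_zero k)
  field_simp
end
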